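/- arXiv:2406.01166 — 4 statements merged into one kernel-verified Lean document; each statement's English description precedes it below -/
import Mathlib

section
/- For every q ∈ ℂ and every n ≥ 1, the q-fundamental quasisymmetric function indexed by the identity permutation id_n ∈ S_n equals the Hall–Littlewood symmetric function with parameter −q: L^{(q)}_{id_n} = q_n(X; −q). -/
open Classical
noncomputable section

def pmlt (a b : ℤ) : Prop :=
  2 * a.natAbs + (if 0 < a then 1 else 0) < 2 * b.natAbs + (if 0 < b then 1 else 0)

def IsEnriched {n : ℕ} (P : Fin n → Fin n → Prop) (f : Fin n → ℤ) : Prop :=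
  (∀ i, f i ≠ 0) ∧
  ∀ i j, P i j →
    ((i < j → pmlt (f i) (f j) ∨ (f i = f j ∧ 0 < f i)) ∧
     (j < i → pmlt (f i) (f j) ∨ (f i = f j ∧ f i < 0)))

def monomOf {n : ℕ} (f : Fin n → ℤ) : ℕ →₀ ℕ :=
  ∑ i, Finsupp.single ((f i).natAbs - 1) 1

def negCount {n : ℕ} (f : Fin n → ℤ) : ℕ :=
  (Finset.univ.filter fun i => f i < 0).card

def Gamma {n : ℕ} (q : ℂ) (P : Fin n → Fin n → Prop) : MvPowerSeries ℕ ℂ :=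
  fun d => ∑' f : {f : Fin n → ℤ // IsEnriched P f},
    if monomOf f.1 = d then q ^ negCount f.1 else 0

def hh (m : ℕ) : MvPowerSeries ℕ ℂ :=
  fun d => if d.sum (fun _ v => v) = m then 1 else 0

def ee (k : ℕ) : MvPowerSeries ℕ ℂ :=
  fun d => if (d.sum (fun _ v => v) = k ∧ ∀ i, d i ≤ 1) then 1 else 0

def qHL (t : ℂ) (n : ℤ) : MvPowerSeries ℕ ℂ :=
  if n < 0 then 0 else
    ∑ k ∈ Finset.range (n.toNat + 1), ((-t) ^ k) • (ee k * hh (n.toNat - k))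

def SHL (t : ℂ) (l m : ℕ → ℕ) (k : ℕ) : MvPowerSeries ℕ ℂ :=
  Matrix.det (Matrix.of fun i j : Fin k =>
    qHL t ((l i : ℤ) - (m j : ℤ) - (i : ℤ) + (j : ℤ)))

/-- The total order `<_π` on `[n]` (encoded on `Fin n`) given by
`π_1 <_π π_2 <_π ⋯ <_π π_n`. -/
def permOrd {n : ℕ} (π : Equiv.Perm (Fin n)) (i j : Fin n) : Prop :=
  π.symm i < π.symm j

/-- The `q`-fundamental quasisymmetric function `L^{(q)}_π = Γ^{(q)}([n], <_π)`. -/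
def Lq {n : ℕ} (q : ℂ) (π : Equiv.Perm (Fin n)) : MvPowerSeries ℕ ℂ :=
  Gamma q (permOrd π)

/-- The descent set `Des(π) = {i ∈ [n-1] : π_i > π_{i+1}}` of `π ∈ S_n`
(with positions 1-indexed). -/
def DesPerm {n : ℕ} (π : Equiv.Perm (Fin n)) : Finset ℕ :=
  (Finset.range n).filter fun v =>
    ∃ (h1 : v - 1 < n) (h2 : v < n), 1 ≤ v ∧ π ⟨v, h2⟩ < π ⟨v - 1, h1⟩

def Rq (a b : ℤ) : Prop := pmlt a b ∨ (a = b ∧ 0 < a)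

lemma pmlt_antisymm {a b : ℤ} (h1 : Rq a b) (h2 : Rq b a) : a = b := by
  rcases h1 with h1 | h1
  · rcases h2 with h2 | h2
    · unfold pmlt at h1 h2; omega
    · exact h2.1.symm
  · exact h1.1

instance : IsAntisymm ℤ Rq := ⟨fun _ _ => pmlt_antisymm⟩

lemma enriched_one_iff {n : ℕ} (f : Fin n → ℤ) :
    IsEnriched (permOrd (1 : Equiv.Perm (Fin n))) f ↔
      (∀ i, f i ≠ 0) ∧ List.Pairwise Rq (List.ofFn f) := by
  rw [List.pairwise_ofFn]
  constructor
  · rintro ⟨h0, h⟩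
    exact ⟨h0, fun i j hij => (h i j hij).1 hij⟩
  · rintro ⟨h0, h⟩
    refine ⟨h0, fun i j hij => ?_⟩
    have hij' : i < j := hij
    exact ⟨fun _ => h hij', fun hji => absurd hij' (not_lt.2 hji.le)⟩

lemma card_filter_eq_countP {n : ℕ} {α : Type*} (f : Fin n → α) (p : α → Prop)
    [DecidablePred p] :
    (Finset.univ.filter fun i => p (f i)).card
      = (List.ofFn f).countP (fun a => decide (p a)) := by
  rw [← Multiset.coe_countP, ← Fin.univ_val_map (f := f), Multiset.countP_map]
  rfl

lemma count_ofFn {n : ℕ} {α : Type*} [DecidableEq α] (f : Fin n → α) (v : α) :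
    (List.ofFn f).count v = (Finset.univ.filter fun i => f i = v).card := by
  rw [List.count, card_filter_eq_countP f (fun a => a = v)]
  apply List.countP_congr
  intro a _
  simp

def blok (d : ℕ →₀ ℕ) (S : Finset ℕ) (m : ℕ) : List ℤ :=
  (if m ∈ S then [-(m + 1 : ℤ)] else []) ++
    List.replicate (d m - (if m ∈ S then 1 else 0)) ((m : ℤ) + 1)

def cL (d : ℕ →₀ ℕ) (S : Finset ℕ) : List ℤ :=
  (d.support.sort (· ≤ ·)).flatMap (blok d S)

lemma sum_map_sort {β : Type*} [AddCommMonoid β] (s : Finset ℕ) (g : ℕ → β) :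
    ((s.sort (· ≤ ·)).map g).sum = ∑ m ∈ s, g m := by
  rw [Finset.sum_eq_multiset_sum, ← Finset.sort_eq s (· ≤ ·), Multiset.map_coe,
    Multiset.sum_coe]

lemma length_blok {d : ℕ →₀ ℕ} {S : Finset ℕ} {m : ℕ} (hm : m ∈ d.support) :
    (blok d S m).length = d m := by
  have h1 : 1 ≤ d m := Nat.one_le_iff_ne_zero.2 (Finsupp.mem_support_iff.1 hm)
  unfold blok
  split_ifs <;> simp <;> omega

lemma length_cL (d : ℕ →₀ ℕ) (S : Finset ℕ) :
    (cL d S).length = d.sum fun _ v => v := by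
  rw [cL, List.length_flatMap, sum_map_sort]
  exact Finset.sum_congr rfl fun m hm => length_blok hm

lemma mem_blok {d : ℕ →₀ ℕ} {S : Finset ℕ} {m : ℕ} {x : ℤ} (hx : x ∈ blok d S m) :
    x = -((m : ℤ) + 1) ∨ x = (m : ℤ) + 1 := by
  rcases List.mem_append.1 hx with h | h
  · split_ifs at h with hS
    · simp at h; omega
    · simp at h
  · exact Or.inr (List.eq_of_mem_replicate h)

lemma mem_blok_ne_zero {d : ℕ →₀ ℕ} {S : Finset ℕ} {m : ℕ} {x : ℤ} (hx : x ∈ blok d S m) :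
    x ≠ 0 := by
  rcases mem_blok hx with h | h <;> omega

lemma natAbs_mem_blok {d : ℕ →₀ ℕ} {S : Finset ℕ} {m : ℕ} {x : ℤ} (hx : x ∈ blok d S m) :
    x.natAbs = m + 1 := by
  rcases mem_blok hx with h | h <;> omega

lemma pairwise_blok (d : ℕ →₀ ℕ) (S : Finset ℕ) (m : ℕ) :
    List.Pairwise Rq (blok d S m) := by
  unfold blok
  rw [List.pairwise_append]
  refine ⟨?_, ?_, ?_⟩
  · split_ifs <;> simp
  · rw [List.pairwise_replicate]
    right
    right
    constructor
    · rfl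
    · positivity
  · intro x hx y hy
    split_ifs at hx with hS
    · simp at hx
      have hy' := List.eq_of_mem_replicate hy
      subst hx hy'
      left
      simp only [pmlt]
      split_ifs <;> omega
    · simp at hx

lemma pairwise_cL (d : ℕ →₀ ℕ) (S : Finset ℕ) : List.Pairwise Rq (cL d S) := by
  rw [cL, List.pairwise_flatMap]
  constructor
  · exact fun m _ => pairwise_blok d S m
  · have hs : List.Pairwise (· < ·) (d.support.sort (· ≤ ·)) :=
      (Finset.sortedLT_sort d.support).pairwise
    refine hs.imp_of_mem ?_
    intro m m' _ _ hmm' x hx y hy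
    have h1 := natAbs_mem_blok hx
    have h2 := natAbs_mem_blok hy
    left
    simp only [pmlt]
    split_ifs <;> omega

lemma count_blok (d : ℕ →₀ ℕ) (S : Finset ℕ) (m : ℕ) {v : ℤ} (hv : v ≠ 0) :
    (blok d S m).count v =
      if m + 1 = v.natAbs then
        (if v < 0 then (if m ∈ S then 1 else 0)
          else d m - (if m ∈ S then 1 else 0))
      else 0 := by
  have h1 : ((-((m : ℤ) + 1)) = v) ↔ (m + 1 = v.natAbs ∧ v < 0) := by
    constructor <;> intro <;> omega
  have h2 : ((((m : ℤ)) + 1) = v) ↔ (m + 1 = v.natAbs ∧ 0 < v) := by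
    constructor <;> intro <;> omega
  unfold blok
  rw [List.count_append, List.count_replicate]
  split_ifs with a1 a2 a3 a4 <;> simp_all [List.count_singleton] <;> omega

lemma count_cL (d : ℕ →₀ ℕ) (S : Finset ℕ) {v : ℤ} (hv : v ≠ 0) :
    (cL d S).count v =
      if v.natAbs - 1 ∈ d.support then
        (if v < 0 then (if v.natAbs - 1 ∈ S then 1 else 0)
          else d (v.natAbs - 1) - (if v.natAbs - 1 ∈ S then 1 else 0))
      else 0 := by
  rw [cL, List.count_flatMap, sum_map_sort]
  have habs : 1 ≤ v.natAbs := by omega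
  rw [Finset.sum_congr rfl (fun m _ => by
    show (blok d S m).count v = if m = v.natAbs - 1 then
        (if v < 0 then (if m ∈ S then 1 else 0)
          else d m - (if m ∈ S then 1 else 0)) else 0
    rw [count_blok d S m hv]
    congr 1
    · simp only [eq_iff_iff]
      omega)]
  rw [Finset.sum_ite_eq' d.support (v.natAbs - 1)]

lemma count_cL_zero (d : ℕ →₀ ℕ) (S : Finset ℕ) : (cL d S).count 0 = 0 := by
  rw [List.count_eq_zero]
  intro h
  rcases List.mem_flatMap.1 h with ⟨m, _, hm⟩
  exact mem_blok_ne_zero hm rfl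

lemma countP_neg_cL {d : ℕ →₀ ℕ} {S : Finset ℕ} (hS : S ⊆ d.support) :
    (cL d S).countP (fun a => decide (a < 0)) = S.card := by
  rw [cL, List.countP_flatMap, sum_map_sort]
  have hb : ∀ m, (List.countP (fun a => decide (a < 0)) ∘ blok d S) m
      = if m ∈ S then 1 else 0 := by
    intro m
    show (blok d S m).countP _ = _
    unfold blok
    rw [List.countP_append, List.countP_replicate]
    split_ifs <;> simp_all [List.countP_cons] <;> omega
  rw [Finset.sum_congr rfl fun m _ => hb m, ← Finset.card_filter,
    Finset.filter_mem_eq_inter, Finset.inter_eq_right.2 hS]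

lemma mem_cL_ne_zero {d : ℕ →₀ ℕ} {S : Finset ℕ} {x : ℤ} (hx : x ∈ cL d S) : x ≠ 0 := by
  rcases List.mem_flatMap.1 hx with ⟨m, _, hm⟩
  exact mem_blok_ne_zero hm

def cF (n : ℕ) (d : ℕ →₀ ℕ) (S : Finset ℕ) : Fin n → ℤ := fun i => (cL d S).getD i 0

lemma ofFn_cF {n : ℕ} {d : ℕ →₀ ℕ} {S : Finset ℕ} (hd : (d.sum fun _ v => v) = n) :
    List.ofFn (cF n d S) = cL d S := by
  have hlen : (cL d S).length = n := by rw [length_cL, hd]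
  apply List.ext_getElem (by simp [hlen])
  intro i h1 h2
  rw [List.getElem_ofFn]
  show (cL d S).getD i 0 = _
  rw [List.getD_eq_getElem _ _ h2]

lemma enriched_cF {n : ℕ} {d : ℕ →₀ ℕ} {S : Finset ℕ} (hd : (d.sum fun _ v => v) = n) :
    IsEnriched (permOrd (1 : Equiv.Perm (Fin n))) (cF n d S) := by
  rw [enriched_one_iff]
  have hofn := ofFn_cF (S := S) hd
  constructor
  · intro i
    apply mem_cL_ne_zero (d := d) (S := S)
    rw [← hofn]
    exact List.mem_ofFn.2 ⟨i, rfl⟩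
  · rw [hofn]
    exact pairwise_cL d S

lemma natAbs_negsucc (m : ℕ) : (-((m : ℤ) + 1)).natAbs = m + 1 := by omega

lemma natAbs_possucc (m : ℕ) : (((m : ℤ)) + 1).natAbs = m + 1 := by omega

lemma monomOf_eq_counts {n : ℕ} (f : Fin n → ℤ) (h0 : ∀ i, f i ≠ 0) (m : ℕ) :
    monomOf f m = (List.ofFn f).count ((m : ℤ) + 1)
      + (List.ofFn f).count (-((m : ℤ) + 1)) := by
  rw [count_ofFn, count_ofFn]
  have h1 : monomOf f m = (Finset.univ.filter fun i => (f i).natAbs - 1 = m).card := by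
    rw [monomOf, Finsupp.finset_sum_apply, Finset.card_filter]
    exact Finset.sum_congr rfl fun i _ => by rw [Finsupp.single_apply]
  rw [h1]
  have hset : (Finset.univ.filter fun i => (f i).natAbs - 1 = m)
      = (Finset.univ.filter fun i => f i = (m : ℤ) + 1)
        ∪ (Finset.univ.filter fun i => f i = -((m : ℤ) + 1)) := by
    ext i
    simp only [Finset.mem_filter, Finset.mem_union, Finset.mem_univ, true_and]
    have := h0 i
    omega
  rw [hset, Finset.card_union_of_disjoint]
  rw [Finset.disjoint_left]
  intro i hi hi'
  simp only [Finset.mem_filter, Finset.mem_univ, true_and] at hi hi'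
  omega

lemma negCount_eq_countP {n : ℕ} (f : Fin n → ℤ) :
    negCount f = (List.ofFn f).countP (fun a => decide (a < 0)) :=
  card_filter_eq_countP f (fun a => a < 0)

lemma sum_monomOf {n : ℕ} (f : Fin n → ℤ) : (monomOf f).sum (fun _ v => v) = n := by
  rw [monomOf, ← Finsupp.sum_finset_sum_index (by simp) (by simp)]
  simp [Finsupp.sum_single_index]

lemma monomOf_cF {n : ℕ} {d : ℕ →₀ ℕ} {S : Finset ℕ} (hd : (d.sum fun _ v => v) = n)
    (hS : S ⊆ d.support) : monomOf (cF n d S) = d := by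
  have h0 : ∀ i, cF n d S i ≠ 0 := ((enriched_one_iff _).1 (enriched_cF hd)).1
  ext m
  rw [monomOf_eq_counts _ h0 m, ofFn_cF hd,
    count_cL d S (v := (m : ℤ) + 1) (by omega),
    count_cL d S (v := -((m : ℤ) + 1)) (by omega),
    natAbs_negsucc, natAbs_possucc]
  have hm1 : m + 1 - 1 = m := rfl
  rw [hm1, if_neg (by omega : ¬ ((m : ℤ) + 1 < 0)), if_pos (by omega : (-((m : ℤ) + 1) < 0))]
  by_cases hsupp : m ∈ d.support
  · rw [if_pos hsupp, if_pos hsupp]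
    have hd1 : d m ≠ 0 := Finsupp.mem_support_iff.1 hsupp
    split_ifs <;> omega
  · rw [if_neg hsupp, if_neg hsupp]
    have hd0 : d m = 0 := Finsupp.notMem_support_iff.1 hsupp
    omega

lemma negCount_cF {n : ℕ} {d : ℕ →₀ ℕ} {S : Finset ℕ} (hd : (d.sum fun _ v => v) = n)
    (hS : S ⊆ d.support) : negCount (cF n d S) = S.card := by
  rw [negCount_eq_countP, ofFn_cF hd, countP_neg_cL hS]

lemma count_ofFn_zero {n : ℕ} {f : Fin n → ℤ} (h0 : ∀ i, f i ≠ 0) :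
    (List.ofFn f).count 0 = 0 := by
  rw [count_ofFn]
  simp only [Finset.card_eq_zero, Finset.filter_eq_empty_iff]
  exact fun i _ => h0 i

lemma exists_S {n : ℕ} {d : ℕ →₀ ℕ} {f : Fin n → ℤ}
    (he : IsEnriched (permOrd (1 : Equiv.Perm (Fin n))) f) (hm : monomOf f = d) :
    ∃ S ∈ d.support.powerset, f = cF n d S := by
  obtain ⟨h0, hpw⟩ := (enriched_one_iff f).1 he
  have hd : (d.sum fun _ v => v) = n := by rw [← hm]; exact sum_monomOf f
  set S : Finset ℕ :=
    (Finset.univ.filter fun i => f i < 0).image (fun i => (f i).natAbs - 1) with hSdef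
  -- membership in S
  have hmemS : ∀ m : ℕ, m ∈ S ↔ ∃ i, f i = -((m : ℤ) + 1) := by
    intro m
    rw [hSdef]
    simp only [Finset.mem_image, Finset.mem_filter, Finset.mem_univ, true_and]
    constructor
    · rintro ⟨i, hi1, hi2⟩
      exact ⟨i, by have := h0 i; omega⟩
    · rintro ⟨i, hi⟩
      exact ⟨i, by omega, by omega⟩
  -- negative values appear at most once
  have hneg1 : ∀ v : ℤ, v < 0 →
      (Finset.univ.filter fun i => f i = v).card ≤ 1 := by
    intro v hv
    rw [Finset.card_le_one]
    intro i hi j hj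
    simp only [Finset.mem_filter, Finset.mem_univ, true_and] at hi hj
    by_contra hne
    have hR : ∀ a b : Fin n, a < b → Rq (f a) (f b) := List.pairwise_ofFn.1 hpw
    rcases lt_or_gt_of_ne hne with h | h
    · rcases hR i j h with h' | h'
      · rw [hi, hj] at h'; simp only [pmlt] at h'; omega
      · rw [hi] at h'; omega
    · rcases hR j i h with h' | h'
      · rw [hi, hj] at h'; simp only [pmlt] at h'; omega
      · rw [hj] at h'; omega
  have hS : S ⊆ d.support := by
    intro m hmS
    obtain ⟨i, hi⟩ := (hmemS m).1 hmS
    rw [Finsupp.mem_support_iff, ← hm]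
    have := monomOf_eq_counts f h0 m
    have hge : 1 ≤ (List.ofFn f).count (-((m : ℤ) + 1)) := by
      rw [count_ofFn]
      refine Finset.card_pos.2 ⟨i, ?_⟩
      simp [hi]
    omega
  -- counts of negative values
  have hcneg : ∀ m : ℕ, (List.ofFn f).count (-((m : ℤ) + 1))
      = if m ∈ S then 1 else 0 := by
    intro m
    rw [count_ofFn]
    by_cases hmS : m ∈ S
    · rw [if_pos hmS]
      obtain ⟨i, hi⟩ := (hmemS m).1 hmS
      refine le_antisymm (hneg1 _ (by omega)) ?_
      refine Finset.card_pos.2 ⟨i, ?_⟩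
      simp [hi]
    · rw [if_neg hmS]
      simp only [Finset.card_eq_zero, Finset.filter_eq_empty_iff]
      intro i _ hi
      exact hmS ((hmemS m).2 ⟨i, hi⟩)
  -- all counts agree with cL d S
  have hcount : ∀ v : ℤ, (List.ofFn f).count v = (cL d S).count v := by
    intro v
    rcases lt_trichotomy v 0 with hv | hv | hv
    · -- negative
      obtain ⟨m, hm'⟩ : ∃ m : ℕ, v = -((m : ℤ) + 1) := ⟨v.natAbs - 1, by omega⟩
      subst hm'
      rw [hcneg, count_cL d S (by omega : -((m : ℤ) + 1) ≠ 0), natAbs_negsucc,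
        if_pos (by omega : -((m : ℤ) + 1) < 0)]
      have hm1 : m + 1 - 1 = m := rfl
      rw [hm1]
      by_cases hmS : m ∈ S
      · rw [if_pos hmS, if_pos (hS hmS)]
      · rw [if_neg hmS]
        split_ifs <;> rfl
    · subst hv
      rw [count_ofFn_zero h0, count_cL_zero]
    · -- positive
      obtain ⟨m, hm'⟩ : ∃ m : ℕ, v = (m : ℤ) + 1 := ⟨v.natAbs - 1, by omega⟩
      subst hm'
      rw [count_cL d S (by omega : ((m : ℤ) + 1) ≠ 0), natAbs_possucc,
        if_neg (by omega : ¬ ((m : ℤ) + 1 < 0))]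
      have hm1 : m + 1 - 1 = m := rfl
      rw [hm1]
      have hmono := monomOf_eq_counts f h0 m
      rw [hm] at hmono
      have hcnegm := hcneg m
      by_cases hsupp : m ∈ d.support
      · rw [if_pos hsupp]
        split_ifs at * <;> omega
      · rw [if_neg hsupp]
        have hd0 : d m = 0 := Finsupp.notMem_support_iff.1 hsupp
        split_ifs at * <;> omega
  -- permutation and sortedness give equality of lists
  have hperm : (List.ofFn f).Perm (cL d S) := List.perm_iff_count.2 fun v => hcount v
  have heq : List.ofFn f = cL d S :=
    List.Perm.eq_of_pairwise (fun _ _ _ _ h1 h2 => pmlt_antisymm h1 h2) hpw (pairwise_cL d S) hperm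
  refine ⟨S, Finset.mem_powerset.2 hS, ?_⟩
  funext i
  have hlen : (i : ℕ) < (List.ofFn f).length := by simp
  calc f i = (List.ofFn f).getD i 0 := by
        rw [List.getD_eq_getElem _ _ hlen, List.getElem_ofFn]
    _ = (cL d S).getD i 0 := by rw [heq]
    _ = cF n d S i := rfl

lemma cF_inj {n : ℕ} {d : ℕ →₀ ℕ} {S S' : Finset ℕ} (hd : (d.sum fun _ v => v) = n)
    (hS : S ⊆ d.support) (hS' : S' ⊆ d.support) (h : cF n d S = cF n d S') : S = S' := by
  have hL : cL d S = cL d S' := by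
    rw [← ofFn_cF (S := S) hd, ← ofFn_cF (S := S') hd, h]
  ext m
  have h1 := count_cL d S (v := -((m : ℤ) + 1)) (by omega)
  have h2 := count_cL d S' (v := -((m : ℤ) + 1)) (by omega)
  rw [hL, h2] at h1
  rw [natAbs_negsucc, if_pos (by omega : -((m : ℤ) + 1) < 0),
    if_pos (by omega : -((m : ℤ) + 1) < 0)] at h1
  have hm1 : m + 1 - 1 = m := rfl
  rw [hm1] at h1
  constructor
  · intro hmS
    have hsupp := hS hmS
    rw [if_pos hsupp, if_pos hsupp, if_pos hmS] at h1
    by_contra hmS'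
    rw [if_neg hmS'] at h1
    omega
  · intro hmS'
    have hsupp := hS' hmS'
    rw [if_pos hsupp, if_pos hsupp, if_pos hmS'] at h1
    by_contra hmS
    rw [if_neg hmS] at h1
    omega

lemma finsupp_sum_add (u v : ℕ →₀ ℕ) :
    ((u + v).sum fun _ x => x) = (u.sum fun _ x => x) + (v.sum fun _ x => x) :=
  Finsupp.sum_add_index' (by simp) (by simp)

lemma sum_binary (u : ℕ →₀ ℕ) (hu : ∀ i, u i ≤ 1) :
    (u.sum fun _ x => x) = u.support.card := by
  rw [Finsupp.sum, Finset.card_eq_sum_ones]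
  refine Finset.sum_congr rfl fun x hx => ?_
  have := Finsupp.mem_support_iff.1 hx
  have := hu x
  omega

lemma card_support_le (d : ℕ →₀ ℕ) : d.support.card ≤ d.sum fun _ x => x := by
  rw [Finsupp.sum, Finset.card_eq_sum_ones]
  refine Finset.sum_le_sum fun x hx => ?_
  have := Finsupp.mem_support_iff.1 hx
  omega

lemma inner_card {n k : ℕ} (d : ℕ →₀ ℕ) (hk : k ≤ n) (hd : (d.sum fun _ x => x) = n) :
    ((Finset.HasAntidiagonal.antidiagonal d).filter fun p =>
        ((p.1.sum fun _ x => x) = k ∧ ∀ i, p.1 i ≤ 1) ∧ (p.2.sum fun _ x => x) = n - k).card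
      = (d.support.powerset.filter fun S => S.card = k).card := by
  apply Finset.card_nbij (fun p => p.1.support)
  · rintro ⟨u, v⟩ hp
    simp only [Finset.coe_filter, Set.mem_setOf_eq, Finset.HasAntidiagonal.mem_antidiagonal] at hp
    obtain ⟨huv, ⟨hsum, hbin⟩, hvsum⟩ := hp
    simp only [Finset.coe_filter, Set.mem_setOf_eq, Finset.mem_powerset]
    constructor
    · intro x hx
      rw [Finsupp.mem_support_iff] at hx ⊢
      have : d x = u x + v x := by rw [← huv]; rfl
      omega
    · rw [← sum_binary u hbin, hsum]
  · rintro ⟨u, v⟩ hp ⟨u', v'⟩ hp' h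
    simp only [Finset.coe_filter, Set.mem_setOf_eq, Finset.HasAntidiagonal.mem_antidiagonal] at hp hp'
    obtain ⟨huv, ⟨hsum, hbin⟩, _⟩ := hp
    obtain ⟨huv', ⟨hsum', hbin'⟩, _⟩ := hp'
    simp only at h
    have hu : u = u' := by
      ext x
      have h1 := hbin x
      have h2 := hbin' x
      by_cases hx : x ∈ u.support
      · have hx' : x ∈ u'.support := h ▸ hx
        have := Finsupp.mem_support_iff.1 hx
        have := Finsupp.mem_support_iff.1 hx'
        omega
      · have hx' : x ∉ u'.support := h ▸ hx
        have := Finsupp.notMem_support_iff.1 hx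
        have := Finsupp.notMem_support_iff.1 hx'
        omega
    subst hu
    have hv : v = v' := by
      have := huv.trans huv'.symm
      exact add_left_cancel this
    rw [hv]
  · rintro S hS
    simp only [Finset.coe_filter, Set.mem_setOf_eq, Finset.mem_powerset] at hS
    obtain ⟨hSsub, hScard⟩ := hS
    set u : ℕ →₀ ℕ := S.val.toFinsupp with hu
    have huapp : ∀ x, u x = if x ∈ S then 1 else 0 := by
      intro x
      rw [hu, Multiset.toFinsupp_apply]
      split_ifs with hxS
      · exact Multiset.count_eq_one_of_mem S.nodup hxS
      · exact Multiset.count_eq_zero_of_notMem hxS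
    have husupp : u.support = S := by
      rw [hu, Multiset.toFinsupp_support, Finset.val_toFinset]
    have hbin : ∀ i, u i ≤ 1 := by
      intro i; rw [huapp]; split_ifs <;> omega
    have hule : u ≤ d := by
      rw [Finsupp.le_def]
      intro x
      rw [huapp]
      split_ifs with hxS
      · have := Finsupp.mem_support_iff.1 (hSsub hxS)
        omega
      · omega
    have hadd : u + (d - u) = d := add_tsub_cancel_of_le hule
    have husum : (u.sum fun _ x => x) = k := by
      rw [sum_binary u hbin, husupp, hScard]
    refine ⟨(u, d - u), ?_, ?_⟩
    · simp only [Finset.coe_filter, Set.mem_setOf_eq, Finset.HasAntidiagonal.mem_antidiagonal]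
      refine ⟨hadd, ⟨husum, hbin⟩, ?_⟩
      have := finsupp_sum_add u (d - u)
      rw [hadd, hd, husum] at this
      omega
    · exact husupp

lemma coeff_qHL (q : ℂ) (n : ℕ) (d : ℕ →₀ ℕ) :
    qHL (-q) (n : ℤ) d =
      if (d.sum fun _ x => x) = n then (∑ S ∈ d.support.powerset, q ^ S.card) else 0 := by
  have h1 : qHL (-q) (n : ℤ)
      = ∑ k ∈ Finset.range (n + 1), (q ^ k) • (ee k * hh (n - k)) := by
    rw [qHL, if_neg (by exact_mod_cast Int.not_lt.2 (Int.natCast_nonneg n))]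
    simp [Int.toNat_natCast]
  rw [h1]
  have happ : (∑ k ∈ Finset.range (n + 1), (q ^ k) • (ee k * hh (n - k))) d
      = ∑ k ∈ Finset.range (n + 1), q ^ k * ((ee k * hh (n - k)) d) := by
    have h2 := map_sum (MvPowerSeries.coeff (R := ℂ) d)
      (fun k => (q ^ k) • (ee k * hh (n - k))) (Finset.range (n + 1))
    rw [MvPowerSeries.coeff_apply] at h2
    rw [h2]
    refine Finset.sum_congr rfl fun k _ => ?_
    rw [LinearMap.map_smul, smul_eq_mul, MvPowerSeries.coeff_apply]
  rw [happ]
  have hmul : ∀ k, ((ee k * hh (n - k)) d)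
      = ∑ p ∈ Finset.HasAntidiagonal.antidiagonal d,
          (if ((p.1.sum fun _ x => x) = k ∧ ∀ i, p.1 i ≤ 1) then (1 : ℂ) else 0)
            * (if (p.2.sum fun _ x => x) = n - k then (1 : ℂ) else 0) := by
    intro k
    calc (ee k * hh (n - k)) d = MvPowerSeries.coeff (R := ℂ) d (ee k * hh (n - k)) := rfl
      _ = ∑ p ∈ Finset.HasAntidiagonal.antidiagonal d,
            MvPowerSeries.coeff (R := ℂ) p.1 (ee k) * MvPowerSeries.coeff (R := ℂ) p.2 (hh (n - k)) :=
        MvPowerSeries.coeff_mul d _ _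
      _ = _ := rfl
  by_cases hd : (d.sum fun _ x => x) = n
  · rw [if_pos hd]
    have hstep : ∀ k ∈ Finset.range (n + 1),
        q ^ k * ((ee k * hh (n - k)) d)
          = ∑ S ∈ d.support.powerset.filter (fun S => S.card = k), q ^ S.card := by
      intro k hk
      have hkn : k ≤ n := by
        have := Finset.mem_range.1 hk
        omega
      rw [hmul k]
      have hsum : (∑ p ∈ Finset.HasAntidiagonal.antidiagonal d,
          (if ((p.1.sum fun _ x => x) = k ∧ ∀ i, p.1 i ≤ 1) then (1 : ℂ) else 0)
            * (if (p.2.sum fun _ x => x) = n - k then (1 : ℂ) else 0))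
          = ((d.support.powerset.filter fun S => S.card = k).card : ℂ) := by
        rw [Finset.sum_congr rfl (fun p _ => by
          rw [ite_mul, one_mul, zero_mul, ← ite_and])]
        rw [Finset.sum_boole, inner_card d hkn hd]
      rw [hsum]
      rw [Finset.sum_congr rfl (fun S hS => by
        rw [(Finset.mem_filter.1 hS).2]), Finset.sum_const, nsmul_eq_mul, mul_comm]
    rw [Finset.sum_congr rfl hstep]
    refine Finset.sum_fiberwise_of_maps_to (fun S hS => ?_) _
    rw [Finset.mem_range]
    have h3 := Finset.card_le_card (Finset.mem_powerset.1 hS)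
    have h4 := card_support_le d
    omega
  · rw [if_neg hd]
    refine Finset.sum_eq_zero fun k hk => ?_
    rw [hmul k]
    rw [Finset.sum_eq_zero, mul_zero]
    rintro ⟨u, v⟩ hp
    rw [Finset.HasAntidiagonal.mem_antidiagonal] at hp
    rw [ite_mul, one_mul, zero_mul, ← ite_and, if_neg]
    rintro ⟨⟨husum, -⟩, hvsum⟩
    apply hd
    have := finsupp_sum_add u v
    rw [hp, husum, hvsum] at this
    have := Finset.mem_range.1 hk
    omega

lemma coeff_Gamma (q : ℂ) (n : ℕ) (d : ℕ →₀ ℕ) :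
    Gamma q (permOrd (1 : Equiv.Perm (Fin n))) d =
      if (d.sum fun _ x => x) = n then (∑ S ∈ d.support.powerset, q ^ S.card) else 0 := by
  show (∑' f : {f : Fin n → ℤ // IsEnriched (permOrd (1 : Equiv.Perm (Fin n))) f},
      if monomOf f.1 = d then q ^ negCount f.1 else 0) = _
  by_cases hd : (d.sum fun _ x => x) = n
  · rw [if_pos hd]
    set T : Finset {f : Fin n → ℤ // IsEnriched (permOrd (1 : Equiv.Perm (Fin n))) f} :=
      d.support.powerset.image (fun S => ⟨cF n d S, enriched_cF hd⟩) with hT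
    rw [tsum_eq_sum (s := T) ?side]
    case side =>
      intro b hb
      rw [if_neg]
      intro hmono
      apply hb
      obtain ⟨S, hSm, hfS⟩ := exists_S b.2 hmono
      rw [hT]
      exact Finset.mem_image.2 ⟨S, hSm, Subtype.ext hfS.symm⟩
    rw [Finset.sum_image ?inj]
    case inj =>
      intro S hS S' hS' h
      exact cF_inj hd (Finset.mem_powerset.1 hS) (Finset.mem_powerset.1 hS')
        (congrArg Subtype.val h)
    refine Finset.sum_congr rfl fun S hS => ?_
    rw [if_pos (monomOf_cF hd (Finset.mem_powerset.1 hS)),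
      negCount_cF hd (Finset.mem_powerset.1 hS)]
  · rw [if_neg hd, tsum_eq_sum (s := (∅ : Finset _)) ?_, Finset.sum_empty]
    intro b _
    rw [if_neg]
    intro hmono
    exact hd (by rw [← hmono]; exact sum_monomOf b.1)

/-- for every `q ∈ ℂ` and every `n ≥ 1`,
`L^{(q)}_{id_n} = q_n(X; -q)`. -/
theorem Lq_id_eq_qHL (q : ℂ) (n : ℕ) (hn : 1 ≤ n) :
    Lq q (1 : Equiv.Perm (Fin n)) = qHL (-q) (n : ℤ) := by
  funext d
  rw [show Lq q (1 : Equiv.Perm (Fin n)) d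
      = Gamma q (permOrd (1 : Equiv.Perm (Fin n))) d from rfl]
  rw [coeff_Gamma q n d, coeff_qHL q n d]
end
end

section
/- Let q ∈ ℂ, π ∈ S_n and σ ∈ S_m. Then L^{(q)}_π · L^{(q)}_σ = ∑_{τ ∈ π ⧢ σ̄} L^{(q)}_τ, where σ̄ denotes the word (n+σ_1, n+σ_2, …, n+σ_m) and π ⧢ σ̄ is the set of all permutations of S_{n+m} obtained as shuffles (interleavings) of the word π_1 π_2 ⋯ π_n with the word σ̄, each word keeping its relative order. -/
open Classical
noncomputable section

/-- `τ ∈ S_{n+m}` is a shuffle of the word `π_1 ⋯ π_n` with the word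
`σ̄ = (n+σ_1, …, n+σ_m)`: there are strictly increasing sequences of positions
`a` and `b` along which the word of `τ` reads `π`, respectively `σ̄`
(each word keeping its relative order). -/
def IsShuffle {n m : ℕ} (π : Equiv.Perm (Fin n)) (σ : Equiv.Perm (Fin m))
    (τ : Equiv.Perm (Fin (n + m))) : Prop :=
  ∃ (a : Fin n → Fin (n + m)) (b : Fin m → Fin (n + m)),
    StrictMono a ∧ StrictMono b ∧
    (∀ i, (τ (a i) : ℕ) = (π i : ℕ)) ∧ (∀ j, (τ (b j) : ℕ) = n + (σ j : ℕ))

set_option maxRecDepth 4000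

/-! ### key development -/

def lev (a : ℤ) : ℕ := 2 * a.natAbs + (if 0 < a then 1 else 0)

lemma pmlt_iff {a b : ℤ} : pmlt a b ↔ lev a < lev b := Iff.rfl

lemma lev_inj {a b : ℤ} (ha : a ≠ 0) (hb : b ≠ 0) (h : lev a = lev b) : a = b := by
  unfold lev at h; split_ifs at h <;> omega

def key {k : ℕ} (h : Fin k → ℤ) (i : Fin k) : ℕ ×ₗ ℕ :=
  toLex (lev (h i), if 0 < h i then (i : ℕ) else k - (i : ℕ))

lemma key_lt_of_cond {k : ℕ} {h : Fin k → ℤ} {x y : Fin k} (hne : ∀ i, h i ≠ 0) (hxy : x ≠ y)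
    (h1 : x < y → pmlt (h x) (h y) ∨ (h x = h y ∧ 0 < h x))
    (h2 : y < x → pmlt (h x) (h y) ∨ (h x = h y ∧ h x < 0)) :
    key h x < key h y := by
  have hx' := x.isLt
  have hy' := y.isLt
  rcases lt_or_gt_of_ne hxy with hlt | hlt
  · rcases h1 hlt with hp | ⟨he, hpos⟩
    · exact (Prod.Lex.lt_iff (x := toLex _) (y := toLex _)).2 (Or.inl hp)
    · refine (Prod.Lex.lt_iff (x := toLex _) (y := toLex _)).2 (Or.inr ⟨by simp only [ofLex_toLex]; rw [he], ?_⟩)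
      have hpy : 0 < h y := he ▸ hpos
      rw [if_pos hpos, if_pos hpy]
      exact hlt
  · rcases h2 hlt with hp | ⟨he, hneg⟩
    · exact (Prod.Lex.lt_iff (x := toLex _) (y := toLex _)).2 (Or.inl hp)
    · refine (Prod.Lex.lt_iff (x := toLex _) (y := toLex _)).2 (Or.inr ⟨by simp only [ofLex_toLex]; rw [he], ?_⟩)
      have hx2 : ¬ 0 < h x := by omega
      have hy2 : ¬ 0 < h y := by rw [← he]; omega
      simp only [key, ofLex_toLex]
      rw [if_neg hx2, if_neg hy2]
      have hyx : (y : ℕ) < (x : ℕ) := hlt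
      omega

lemma cond_of_key_lt {k : ℕ} {h : Fin k → ℤ} {x y : Fin k} (hne : ∀ i, h i ≠ 0)
    (hk : key h x < key h y) :
    (x < y → pmlt (h x) (h y) ∨ (h x = h y ∧ 0 < h x)) ∧
    (y < x → pmlt (h x) (h y) ∨ (h x = h y ∧ h x < 0)) := by
  have hx' := x.isLt
  have hy' := y.isLt
  rcases (Prod.Lex.lt_iff (x := toLex _) (y := toLex _)).1 hk with hp | ⟨he, ht⟩
  · exact ⟨fun _ => Or.inl hp, fun _ => Or.inl hp⟩
  · simp only [key, ofLex_toLex] at he ht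
    have heq : h x = h y := lev_inj (hne x) (hne y) he
    by_cases hpos : 0 < h x
    · have hxy : (x : ℕ) < (y : ℕ) := by
        rw [if_pos hpos, if_pos (heq ▸ hpos)] at ht; exact ht
      exact ⟨fun _ => Or.inr ⟨heq, hpos⟩,
        fun hyx => absurd (show (y:ℕ) < (x:ℕ) from hyx) (by omega)⟩
    · have hxneg : h x < 0 := by have := hne x; omega
      have hyx : (y : ℕ) < (x : ℕ) := by
        rw [if_neg hpos, if_neg (show ¬ 0 < h y by rw [← heq]; exact hpos)] at ht
        omega
      exact ⟨fun hxy => absurd (show (x:ℕ) < (y:ℕ) from hxy) (by omega),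
        fun _ => Or.inr ⟨heq, hxneg⟩⟩

lemma key_injective {k : ℕ} {h : Fin k → ℤ} (hne : ∀ i, h i ≠ 0) :
    Function.Injective (key h) := by
  intro x y hxy
  have he : lev (h x) = lev (h y) := congrArg (fun p : ℕ ×ₗ ℕ => (ofLex p).1) hxy
  have ht : (if 0 < h x then (x:ℕ) else k - x) = (if 0 < h y then (y:ℕ) else k - y) :=
    congrArg (fun p : ℕ ×ₗ ℕ => (ofLex p).2) hxy
  have heq : h x = h y := lev_inj (hne x) (hne y) he
  have hx' := x.isLt
  have hy' := y.isLt
  apply Fin.ext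
  by_cases hpos : 0 < h x
  · rwa [if_pos hpos, if_pos (heq ▸ hpos)] at ht
  · rw [if_neg hpos, if_neg (show ¬ 0 < h y by rw [← heq]; exact hpos)] at ht
    omega

/-- enrichedness for the total order of `τ` is equivalent to keys increasing along `τ`. -/
lemma isEnriched_permOrd_iff {k : ℕ} (h : Fin k → ℤ) (τ : Equiv.Perm (Fin k)) :
    IsEnriched (permOrd τ) h ↔ (∀ i, h i ≠ 0) ∧ StrictMono (key h ∘ τ) := by
  constructor
  · rintro ⟨hne, hcond⟩
    refine ⟨hne, fun p p' hpp' => ?_⟩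
    have hpo : permOrd τ (τ p) (τ p') := by
      simpa [permOrd, Equiv.symm_apply_apply] using hpp'
    have hc := hcond (τ p) (τ p') hpo
    exact key_lt_of_cond hne (fun hc' => absurd (τ.injective hc') (ne_of_lt hpp')) hc.1 hc.2
  · rintro ⟨hne, hsm⟩
    refine ⟨hne, fun i j hpo => ?_⟩
    have hk : key h i < key h j := by
      have := hsm (show τ.symm i < τ.symm j from hpo)
      simpa [Function.comp, Equiv.apply_symm_apply] using this
    exact cond_of_key_lt hne hk

def sortPerm {k : ℕ} (h : Fin k → ℤ) : Equiv.Perm (Fin k) := Tuple.sort (key h)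

lemma strictMono_sortPerm {k : ℕ} {h : Fin k → ℤ} (hne : ∀ i, h i ≠ 0) :
    StrictMono (key h ∘ sortPerm h) :=
  (Tuple.monotone_sort (key h)).strictMono_of_injective
    ((key_injective hne).comp (Equiv.injective _))

lemma sortPerm_unique {k : ℕ} {h : Fin k → ℤ} (hne : ∀ i, h i ≠ 0)
    {τ : Equiv.Perm (Fin k)} (hτ : StrictMono (key h ∘ τ)) : τ = sortPerm h := by
  have hcard : (Finset.univ.image (key h)).card = k := by
    rw [Finset.card_image_of_injective _ (key_injective hne), Finset.card_univ, Fintype.card_fin]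
  have h1 : (key h ∘ τ) = (Finset.univ.image (key h)).orderEmbOfFin hcard :=
    Finset.orderEmbOfFin_unique hcard (fun x => Finset.mem_image_of_mem _ (Finset.mem_univ _)) hτ
  have h2 : (key h ∘ sortPerm h) = (Finset.univ.image (key h)).orderEmbOfFin hcard :=
    Finset.orderEmbOfFin_unique hcard (fun x => Finset.mem_image_of_mem _ (Finset.mem_univ _))
      (strictMono_sortPerm hne)
  ext p
  exact Fin.val_eq_of_eq (key_injective hne (by
    have := congrFun (h1.trans h2.symm) p
    exact this))

/-! ### combine / split -/

def combine {n m : ℕ} (f : Fin n → ℤ) (g : Fin m → ℤ) : Fin (n + m) → ℤ :=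
  Fin.addCases f g

@[simp] lemma combine_left {n m : ℕ} (f : Fin n → ℤ) (g : Fin m → ℤ) (i : Fin n) :
    combine f g (Fin.castAdd m i) = f i := Fin.addCases_left i

@[simp] lemma combine_right {n m : ℕ} (f : Fin n → ℤ) (g : Fin m → ℤ) (j : Fin m) :
    combine f g (Fin.natAdd n j) = g j := Fin.addCases_right j

lemma combine_split {n m : ℕ} (h : Fin (n + m) → ℤ) :
    combine (h ∘ Fin.castAdd m) (h ∘ Fin.natAdd n) = h := by
  funext i
  refine Fin.addCases (fun i => ?_) (fun j => ?_) i <;> simp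

lemma monomOf_combine {n m : ℕ} (f : Fin n → ℤ) (g : Fin m → ℤ) :
    monomOf (combine f g) = monomOf f + monomOf g := by
  unfold monomOf
  rw [Fin.sum_univ_add]
  simp

lemma negCount_combine {n m : ℕ} (f : Fin n → ℤ) (g : Fin m → ℤ) :
    negCount (combine f g) = negCount f + negCount g := by
  unfold negCount
  simp only [Finset.card_filter]
  rw [Fin.sum_univ_add]
  simp

lemma combine_ne {n m : ℕ} {f : Fin n → ℤ} {g : Fin m → ℤ}
    (hf : ∀ i, f i ≠ 0) (hg : ∀ j, g j ≠ 0) : ∀ i, combine f g i ≠ 0 := by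
  intro i
  refine Fin.addCases (fun i => ?_) (fun j => ?_) i <;> simp [hf, hg]

/-! ### B1 : the sorting permutation of a combined enriched pair is a shuffle -/

lemma symm_sortPerm_lt_iff {k : ℕ} {h : Fin k → ℤ} (hne : ∀ i, h i ≠ 0) {x y : Fin k} :
    (sortPerm h).symm x < (sortPerm h).symm y ↔ key h x < key h y := by
  have hsm := strictMono_sortPerm hne
  constructor
  · intro hlt
    have := hsm hlt
    simpa [Function.comp, Equiv.apply_symm_apply] using this
  · intro hlt
    rcases lt_trichotomy ((sortPerm h).symm x) ((sortPerm h).symm y) with h1 | h1 | h1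
    · exact h1
    · exact absurd (congrArg (sortPerm h) h1) (by
        simp only [Equiv.apply_symm_apply]
        rintro rfl; exact lt_irrefl _ hlt)
    · have := hsm h1
      simp only [Function.comp, Equiv.apply_symm_apply] at this
      exact absurd hlt (not_lt.2 (le_of_lt this))

lemma isShuffle_sortPerm {n m : ℕ} {π : Equiv.Perm (Fin n)} {σ : Equiv.Perm (Fin m)}
    {f : Fin n → ℤ} {g : Fin m → ℤ}
    (hf : IsEnriched (permOrd π) f) (hg : IsEnriched (permOrd σ) g) :
    IsShuffle π σ (sortPerm (combine f g)) := by
  have hne : ∀ i, combine f g i ≠ 0 := combine_ne hf.1 hg.1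
  refine ⟨fun i => (sortPerm (combine f g)).symm (Fin.castAdd m (π i)),
          fun j => (sortPerm (combine f g)).symm (Fin.natAdd n (σ j)), ?_, ?_, ?_, ?_⟩
  · intro i i' hii'
    rw [symm_sortPerm_lt_iff hne]
    have hpo : permOrd π (π i) (π i') := by simpa [permOrd] using hii'
    have hc := hf.2 (π i) (π i') hpo
    have hxy : Fin.castAdd m (π i) ≠ Fin.castAdd m (π i') := fun hcc =>
      absurd (π.injective (Fin.castAdd_injective _ _ hcc)) (ne_of_lt hii')
    refine key_lt_of_cond hne hxy ?_ ?_ <;> intro hlt <;>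
      rw [combine_left, combine_left]
    · exact hc.1 (by rw [Fin.lt_def] at hlt ⊢; simpa using hlt)
    · exact hc.2 (by rw [Fin.lt_def] at hlt ⊢; simpa using hlt)
  · intro j j' hjj'
    rw [symm_sortPerm_lt_iff hne]
    have hpo : permOrd σ (σ j) (σ j') := by simpa [permOrd] using hjj'
    have hc := hg.2 (σ j) (σ j') hpo
    have hxy : Fin.natAdd n (σ j) ≠ Fin.natAdd n (σ j') := fun hcc =>
      absurd (σ.injective (by
        have := congrArg Fin.val hcc
        simp only [Fin.coe_natAdd] at this
        exact Fin.ext (by omega))) (ne_of_lt hjj')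
    refine key_lt_of_cond hne hxy ?_ ?_ <;> intro hlt <;>
      rw [combine_right, combine_right]
    · exact hc.1 (by rw [Fin.lt_def] at hlt ⊢; simp only [Fin.coe_natAdd] at hlt; omega)
    · exact hc.2 (by rw [Fin.lt_def] at hlt ⊢; simp only [Fin.coe_natAdd] at hlt; omega)
  · intro i; simp
  · intro j; simp

/-! ### B2 : restrictions of an enriched shuffle partition are enriched -/

lemma castAdd_lt_iff {n m : ℕ} {i j : Fin n} : Fin.castAdd m i < Fin.castAdd m j ↔ i < j := by
  rw [Fin.lt_def, Fin.lt_def]; simp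

lemma natAdd_lt_iff {n m : ℕ} {i j : Fin m} : Fin.natAdd n i < Fin.natAdd n j ↔ i < j := by
  rw [Fin.lt_def, Fin.lt_def]; simp

lemma isEnriched_left_of_shuffle {n m : ℕ} {π : Equiv.Perm (Fin n)} {σ : Equiv.Perm (Fin m)}
    {τ : Equiv.Perm (Fin (n + m))} (hs : IsShuffle π σ τ) {h : Fin (n + m) → ℤ}
    (he : IsEnriched (permOrd τ) h) : IsEnriched (permOrd π) (h ∘ Fin.castAdd m) := by
  obtain ⟨a, b, ha, hb, hta, htb⟩ := hs
  have hta' : ∀ i, τ (a i) = Fin.castAdd m (π i) := fun i =>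
    Fin.ext (by rw [hta i]; simp)
  refine ⟨fun i => he.1 _, fun i j hpo => ?_⟩
  have hpos : τ.symm (Fin.castAdd m i) < τ.symm (Fin.castAdd m j) := by
    have h1 : τ.symm (Fin.castAdd m i) = a (π.symm i) := by
      rw [Equiv.symm_apply_eq, hta' (π.symm i), Equiv.apply_symm_apply]
    have h2 : τ.symm (Fin.castAdd m j) = a (π.symm j) := by
      rw [Equiv.symm_apply_eq, hta' (π.symm j), Equiv.apply_symm_apply]
    rw [h1, h2]
    exact ha hpo
  have hc := he.2 (Fin.castAdd m i) (Fin.castAdd m j) hpos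
  simp only [Function.comp_apply]
  exact ⟨fun hij => hc.1 (castAdd_lt_iff.2 hij), fun hij => hc.2 (castAdd_lt_iff.2 hij)⟩

lemma isEnriched_right_of_shuffle {n m : ℕ} {π : Equiv.Perm (Fin n)} {σ : Equiv.Perm (Fin m)}
    {τ : Equiv.Perm (Fin (n + m))} (hs : IsShuffle π σ τ) {h : Fin (n + m) → ℤ}
    (he : IsEnriched (permOrd τ) h) : IsEnriched (permOrd σ) (h ∘ Fin.natAdd n) := by
  obtain ⟨a, b, ha, hb, hta, htb⟩ := hs
  have htb' : ∀ j, τ (b j) = Fin.natAdd n (σ j) := fun j =>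
    Fin.ext (by rw [htb j]; simp)
  refine ⟨fun i => he.1 _, fun i j hpo => ?_⟩
  have hpos : τ.symm (Fin.natAdd n i) < τ.symm (Fin.natAdd n j) := by
    have h1 : τ.symm (Fin.natAdd n i) = b (σ.symm i) := by
      rw [Equiv.symm_apply_eq, htb' (σ.symm i), Equiv.apply_symm_apply]
    have h2 : τ.symm (Fin.natAdd n j) = b (σ.symm j) := by
      rw [Equiv.symm_apply_eq, htb' (σ.symm j), Equiv.apply_symm_apply]
    rw [h1, h2]
    exact hb hpo
  have hc := he.2 (Fin.natAdd n i) (Fin.natAdd n j) hpos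
  simp only [Function.comp_apply]
  exact ⟨fun hij => hc.1 (natAdd_lt_iff.2 hij), fun hij => hc.2 (natAdd_lt_iff.2 hij)⟩

/-! ### finiteness and the coefficients of `Gamma` -/

lemma natAbs_le_of_monomOf {k : ℕ} {f : Fin k → ℤ} (hne : ∀ i, f i ≠ 0) {d : ℕ →₀ ℕ}
    (hm : monomOf f = d) (i : Fin k) : (f i).natAbs ≤ d.support.sup id + 1 := by
  have hd : d ((f i).natAbs - 1) ≠ 0 := by
    rw [← hm]
    unfold monomOf
    rw [Finsupp.finset_sum_apply]
    have h1 := Finset.single_le_sum (f := fun j : Fin k =>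
      (Finsupp.single ((f j).natAbs - 1) (1:ℕ)) ((f i).natAbs - 1))
      (fun _ _ => Nat.zero_le _) (Finset.mem_univ i)
    simp only [Finsupp.single_eq_same] at h1
    omega
  have hsup : (f i).natAbs - 1 ∈ d.support := Finsupp.mem_support_iff.2 hd
  have h2 : (f i).natAbs - 1 ≤ d.support.sup id := Finset.le_sup (f := id) hsup
  have h3 : (f i).natAbs ≠ 0 := Int.natAbs_ne_zero.2 (hne i)
  omega

lemma enr_finite {k : ℕ} (P : Fin k → Fin k → Prop) (d : ℕ →₀ ℕ) :
    {f : Fin k → ℤ | IsEnriched P f ∧ monomOf f = d}.Finite := by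
  set N : ℕ := d.support.sup id + 1
  refine Set.Finite.subset (Set.Finite.pi (fun _ : Fin k => Set.finite_Icc (-(N:ℤ)) N)) ?_
  rintro f ⟨hf, hm⟩
  intro i _
  have h1 := natAbs_le_of_monomOf hf.1 hm i
  simp only [Set.mem_Icc]
  omega

def EnrFinset {k : ℕ} (P : Fin k → Fin k → Prop) (d : ℕ →₀ ℕ) : Finset (Fin k → ℤ) :=
  (enr_finite P d).toFinset

lemma mem_EnrFinset {k : ℕ} {P : Fin k → Fin k → Prop} {d : ℕ →₀ ℕ} {f : Fin k → ℤ} :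
    f ∈ EnrFinset P d ↔ IsEnriched P f ∧ monomOf f = d := by
  simp [EnrFinset]

lemma Gamma_apply {k : ℕ} (q : ℂ) (P : Fin k → Fin k → Prop) (d : ℕ →₀ ℕ) :
    Gamma q P d = ∑ f ∈ EnrFinset P d, q ^ negCount f := by
  unfold Gamma
  rw [tsum_eq_sum (s := (EnrFinset P d).subtype (IsEnriched P)) (by
    rintro ⟨f, hf⟩ hfs
    rw [if_neg]
    intro hm
    exact hfs (Finset.mem_subtype.2 (mem_EnrFinset.2 ⟨hf, hm⟩)))]
  rw [Finset.sum_subtype_of_mem (fun a => if monomOf a = d then q ^ negCount a else 0)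
    (fun f hf => (mem_EnrFinset.1 hf).1)]
  apply Finset.sum_congr rfl
  intro f hf
  rw [if_pos (mem_EnrFinset.1 hf).2]

lemma split_combine_left {n m : ℕ} (f : Fin n → ℤ) (g : Fin m → ℤ) :
    (combine f g) ∘ Fin.castAdd m = f := funext fun i => combine_left f g i

lemma split_combine_right {n m : ℕ} (f : Fin n → ℤ) (g : Fin m → ℤ) :
    (combine f g) ∘ Fin.natAdd n = g := funext fun j => combine_right f g j

/-- `L^{(q)}_π · L^{(q)}_σ = ∑_{τ ∈ π ⧢ σ̄} L^{(q)}_τ`. -/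
theorem Lq_mul_Lq (q : ℂ) (n m : ℕ) (π : Equiv.Perm (Fin n)) (σ : Equiv.Perm (Fin m)) :
    Lq q π * Lq q σ = ∑ τ ∈ Finset.univ.filter (fun τ => IsShuffle π σ τ), Lq q τ := by
  apply MvPowerSeries.ext
  intro d
  rw [MvPowerSeries.coeff_mul, map_sum]
  simp only [MvPowerSeries.coeff_apply, Lq, Gamma_apply]
  -- expand the products of sums
  calc
    ∑ p ∈ Finset.HasAntidiagonal.antidiagonal d,
        (∑ f ∈ EnrFinset (permOrd π) p.1, q ^ negCount f) *
          (∑ g ∈ EnrFinset (permOrd σ) p.2, q ^ negCount g)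
      = ∑ p ∈ Finset.HasAntidiagonal.antidiagonal d,
          ∑ x ∈ EnrFinset (permOrd π) p.1 ×ˢ EnrFinset (permOrd σ) p.2,
            q ^ negCount x.1 * q ^ negCount x.2 := by
        refine Finset.sum_congr rfl fun p _ => ?_
        rw [Finset.sum_mul_sum, ← Finset.sum_product']
    _ = ∑ x ∈ (Finset.HasAntidiagonal.antidiagonal d).sigma
          (fun p => EnrFinset (permOrd π) p.1 ×ˢ EnrFinset (permOrd σ) p.2),
          q ^ negCount x.2.1 * q ^ negCount x.2.2 := by
        rw [Finset.sum_sigma]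
    _ = ∑ y ∈ (Finset.univ.filter (fun τ => IsShuffle π σ τ)).sigma
          (fun τ => EnrFinset (permOrd τ) d), q ^ negCount y.2 := ?_
    _ = ∑ τ ∈ Finset.univ.filter (fun τ => IsShuffle π σ τ),
          ∑ h ∈ EnrFinset (permOrd τ) d, q ^ negCount h := by
        rw [Finset.sum_sigma]
  refine Finset.sum_bij'
    (fun (x : (_ : (ℕ →₀ ℕ) × (ℕ →₀ ℕ)) × ((Fin n → ℤ) × (Fin m → ℤ))) _ =>
      (⟨sortPerm (combine x.2.1 x.2.2), combine x.2.1 x.2.2⟩ :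
        (τ : Equiv.Perm (Fin (n + m))) × (Fin (n + m) → ℤ)))
    (fun y _ => ⟨(monomOf (y.2 ∘ Fin.castAdd m), monomOf (y.2 ∘ Fin.natAdd n)),
      (y.2 ∘ Fin.castAdd m, y.2 ∘ Fin.natAdd n)⟩)
    ?_ ?_ ?_ ?_ ?_
  · -- hi : image lands in the target index set
    intro x hx
    obtain ⟨p, f, g⟩ := x
    rw [Finset.mem_sigma] at hx
    obtain ⟨hp, hfg⟩ := hx
    rw [Finset.mem_product] at hfg
    have hf := mem_EnrFinset.1 hfg.1
    have hg := mem_EnrFinset.1 hfg.2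
    have hne : ∀ i, combine f g i ≠ 0 := combine_ne hf.1.1 hg.1.1
    rw [Finset.mem_sigma]
    constructor
    · exact Finset.mem_filter.2 ⟨Finset.mem_univ _, isShuffle_sortPerm hf.1 hg.1⟩
    · refine mem_EnrFinset.2 ⟨(isEnriched_permOrd_iff _ _).2 ⟨hne, strictMono_sortPerm hne⟩, ?_⟩
      rw [monomOf_combine, hf.2, hg.2]
      exact Finset.HasAntidiagonal.mem_antidiagonal.1 hp
  · -- hj
    intro y hy
    obtain ⟨τ, h⟩ := y
    rw [Finset.mem_sigma] at hy
    obtain ⟨hτ, hh⟩ := hy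
    have hτs : IsShuffle π σ τ := (Finset.mem_filter.1 hτ).2
    obtain ⟨hhe, hhm⟩ := mem_EnrFinset.1 hh
    rw [Finset.mem_sigma]
    constructor
    · rw [Finset.HasAntidiagonal.mem_antidiagonal]
      rw [← monomOf_combine, combine_split]
      exact hhm
    · rw [Finset.mem_product]
      exact ⟨mem_EnrFinset.2 ⟨isEnriched_left_of_shuffle hτs hhe, rfl⟩,
        mem_EnrFinset.2 ⟨isEnriched_right_of_shuffle hτs hhe, rfl⟩⟩
  · -- left inverse
    intro x hx
    obtain ⟨⟨d1, d2⟩, f, g⟩ := x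
    rw [Finset.mem_sigma] at hx
    obtain ⟨hp, hfg⟩ := hx
    rw [Finset.mem_product] at hfg
    have h1 : monomOf f = d1 := (mem_EnrFinset.1 hfg.1).2
    have h2 : monomOf g = d2 := (mem_EnrFinset.1 hfg.2).2
    simp only [split_combine_left, split_combine_right, h1, h2]
  · -- right inverse
    intro y hy
    obtain ⟨τ, h⟩ := y
    rw [Finset.mem_sigma] at hy
    obtain ⟨hτ, hh⟩ := hy
    obtain ⟨hhe, hhm⟩ := mem_EnrFinset.1 hh
    obtain ⟨hne, hsm⟩ := (isEnriched_permOrd_iff h τ).1 hhe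
    have hτeq : τ = sortPerm h := sortPerm_unique hne hsm
    simp only [combine_split]
    rw [← hτeq]
  · -- values agree
    intro x hx
    obtain ⟨p, f, g⟩ := x
    rw [negCount_combine, pow_add]
end
end

section
/- For every q ∈ ℂ and every π ∈ S_n: L^{(q)}_π = ∑ q^{#{j ∈ Des(π) : i_j = i_{j+1}}} (q+1)^{#{i_1, i_2, …, i_n}} x_{i_1} x_{i_2} ⋯ x_{i_n}, where the sum ranges over all weakly increasing sequences i_1 ≤ i_2 ≤ ⋯ ≤ i_n of positive integers such that i_{j−1} < i_{j+1} for every j ∈ Peak(π), and #{i_1,…,i_n} is the number of distinct values appearing in the sequence. -/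
open Classical
noncomputable section

/-- The peak set `Peak(π) = {2 ≤ i ≤ n-1 : π_{i-1} < π_i > π_{i+1}}` of `π ∈ S_n`
(positions 1-indexed). -/
def PeakPerm {n : ℕ} (π : Equiv.Perm (Fin n)) : Finset ℕ :=
  (Finset.range n).filter fun v =>
    ∃ (h0 : v - 2 < n) (h1 : v - 1 < n) (h2 : v < n),
      2 ≤ v ∧ π ⟨v - 2, h0⟩ < π ⟨v - 1, h1⟩ ∧ π ⟨v, h2⟩ < π ⟨v - 1, h1⟩

namespace LqAux

lemma pmlt_trans {x y z : ℤ} (h1 : pmlt x y) (h2 : pmlt y z) : pmlt x z := by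
  unfold pmlt at *; split_ifs at * <;> omega

def Rp (x y : ℤ) : Prop := pmlt x y ∨ (x = y ∧ 0 < x)
def Rm (x y : ℤ) : Prop := pmlt x y ∨ (x = y ∧ x < 0)

def psi (b : Bool) (u : ℕ) : ℤ := if b then -((u : ℤ) + 1) else (u : ℤ) + 1

lemma psi_ne_zero (b : Bool) (u : ℕ) : psi b u ≠ 0 := by
  cases b <;> simp [psi] <;> omega

lemma natAbs_psi (b : Bool) (u : ℕ) : (psi b u).natAbs = u + 1 := by
  cases b <;> simp [psi] <;> omega

lemma psi_neg_iff (b : Bool) (u : ℕ) : psi b u < 0 ↔ b = true := by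
  cases b <;> simp [psi] <;> omega

lemma Rp_psi (b c : Bool) (u v : ℕ) :
    Rp (psi b u) (psi c v) ↔ (u < v ∨ (u = v ∧ c = false)) := by
  cases b <;> cases c <;> simp [Rp, pmlt, psi] <;> first | omega | (split_ifs <;> omega)

lemma Rm_psi (b c : Bool) (u v : ℕ) :
    Rm (psi b u) (psi c v) ↔ (u < v ∨ (u = v ∧ b = true)) := by
  cases b <;> cases c <;> simp [Rm, pmlt, psi] <;> first | omega | (split_ifs <;> omega)

variable {n : ℕ}

def dsc (π : Equiv.Perm (Fin n)) (a : ℕ) : Prop :=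
  ∃ (h1 : a < n) (h2 : a + 1 < n), π ⟨a + 1, h2⟩ < π ⟨a, h1⟩

lemma asc_of_not_dsc (π : Equiv.Perm (Fin n)) {a : ℕ} (h2 : a + 1 < n) (h : ¬ dsc π a) :
    π ⟨a, Nat.lt_of_succ_lt h2⟩ < π ⟨a + 1, h2⟩ := by
  have hne : π ⟨a, Nat.lt_of_succ_lt h2⟩ ≠ π ⟨a + 1, h2⟩ := by
    intro he
    have := π.injective he
    simp [Fin.ext_iff] at this
  rcases lt_or_gt_of_ne hne with h' | h'
  · exact h'
  · exact absurd ⟨Nat.lt_of_succ_lt h2, h2, h'⟩ h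

lemma not_dsc_of_asc (π : Equiv.Perm (Fin n)) {a : ℕ} {h1 : a < n} {h2 : a + 1 < n}
    (h : π ⟨a, h1⟩ < π ⟨a + 1, h2⟩) : ¬ dsc π a := by
  rintro ⟨h1', h2', hlt⟩
  exact lt_asymm h hlt

def AdjOK (π : Equiv.Perm (Fin n)) (g : Fin n → ℤ) : Prop :=
  (∀ i, g i ≠ 0) ∧ ∀ a : ℕ, ∀ h2 : a + 1 < n,
    (dsc π a → Rm (g ⟨a, Nat.lt_of_succ_lt h2⟩) (g ⟨a + 1, h2⟩)) ∧
    (¬ dsc π a → Rp (g ⟨a, Nat.lt_of_succ_lt h2⟩) (g ⟨a + 1, h2⟩))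

def Qprop (π : Equiv.Perm (Fin n)) (f : Fin n → ℤ) (a b : Fin n) : Prop :=
  pmlt (f (π a)) (f (π b)) ∨
    (f (π a) = f (π b) ∧ ((0 < f (π a) ∧ π a < π b) ∨ (f (π a) < 0 ∧ π b < π a)))

lemma Qprop_trans {π : Equiv.Perm (Fin n)} {f : Fin n → ℤ} {a b c : Fin n}
    (h1 : Qprop π f a b) (h2 : Qprop π f b c) : Qprop π f a c := by
  rcases h1 with h1 | ⟨e1, s1⟩
  · rcases h2 with h2 | ⟨e2, s2⟩
    · exact Or.inl (pmlt_trans h1 h2)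
    · left; rw [← e2]; exact h1
  · rcases h2 with h2 | ⟨e2, s2⟩
    · left; rw [e1]; exact h2
    · refine Or.inr ⟨e1.trans e2, ?_⟩
      rcases s1 with ⟨hp, hlt⟩ | ⟨hn, hlt⟩
      · rcases s2 with ⟨hp2, hlt2⟩ | ⟨hn2, hlt2⟩
        · exact Or.inl ⟨hp, lt_trans hlt hlt2⟩
        · rw [e1] at hp; omega
      · rcases s2 with ⟨hp2, hlt2⟩ | ⟨hn2, hlt2⟩
        · rw [e1] at hn; omega
        · exact Or.inr ⟨hn, lt_trans hlt2 hlt⟩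

lemma isEnriched_iff (π : Equiv.Perm (Fin n)) (f : Fin n → ℤ) :
    IsEnriched (permOrd π) f ↔ AdjOK π (fun a => f (π a)) := by
  constructor
  · rintro ⟨h0, h⟩
    refine ⟨fun i => h0 _, fun a h2 => ?_⟩
    have hP : permOrd π (π ⟨a, Nat.lt_of_succ_lt h2⟩) (π ⟨a + 1, h2⟩) := by
      unfold permOrd
      rw [Equiv.symm_apply_apply, Equiv.symm_apply_apply]
      exact Fin.mk_lt_mk.mpr (Nat.lt_succ_self a)
    have hij := h _ _ hP
    constructor
    · rintro ⟨h1', h2', hlt⟩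
      exact hij.2 hlt
    · intro hnd
      exact hij.1 (asc_of_not_dsc π h2 hnd)
  · rintro ⟨h0, hstep⟩
    have base : ∀ a : ℕ, ∀ h2 : a + 1 < n,
        Qprop π f ⟨a, Nat.lt_of_succ_lt h2⟩ ⟨a + 1, h2⟩ := by
      intro a h2
      by_cases hd : dsc π a
      · rcases (hstep a h2).1 hd with hp | ⟨he, hneg⟩
        · exact Or.inl hp
        · obtain ⟨h1', h2', hlt⟩ := hd
          exact Or.inr ⟨he, Or.inr ⟨hneg, hlt⟩⟩
      · rcases (hstep a h2).2 hd with hp | ⟨he, hpos⟩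
        · exact Or.inl hp
        · exact Or.inr ⟨he, Or.inl ⟨hpos, asc_of_not_dsc π h2 hd⟩⟩
    have key : ∀ m : ℕ, ∀ hm : m < n, ∀ a : Fin n, (a : ℕ) < m → Qprop π f a ⟨m, hm⟩ := by
      intro m
      induction m with
      | zero => intro hm a ha; omega
      | succ m ih =>
        intro hm a ha
        rcases Nat.eq_or_lt_of_le (Nat.lt_succ_iff.mp ha) with he | hlt
        · have : a = ⟨m, Nat.lt_of_succ_lt hm⟩ := Fin.ext he
          rw [this]
          exact base m hm
        · exact Qprop_trans (ih (Nat.lt_of_succ_lt hm) a hlt) (base m hm)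
    constructor
    · intro i
      have := h0 (π.symm i)
      simpa using this
    · intro i j hij
      have hq := key (π.symm j : ℕ) (π.symm j).isLt (π.symm i) hij
      rw [Fin.eta] at hq
      unfold Qprop at hq
      rw [Equiv.apply_symm_apply, Equiv.apply_symm_apply] at hq
      constructor
      · intro hlt
        rcases hq with hq | ⟨he, ⟨hp, _⟩ | ⟨hn, hgt⟩⟩
        · exact Or.inl hq
        · exact Or.inr ⟨he, hp⟩
        · exact absurd hlt (lt_asymm hgt)
      · intro hlt
        rcases hq with hq | ⟨he, ⟨hp, hgt⟩ | ⟨hn, _⟩⟩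
        · exact Or.inl hq
        · exact absurd hlt (lt_asymm hgt)
        · exact Or.inr ⟨he, hn⟩

def Psi (s : Fin n → ℕ) (ε : Fin n → Bool) : Fin n → ℤ := fun k => psi (ε k) (s k)

lemma monomOf_Psi (s : Fin n → ℕ) (ε : Fin n → Bool) :
    monomOf (Psi s ε) = ∑ j, Finsupp.single (s j) 1 := by
  unfold monomOf Psi
  simp [natAbs_psi]

lemma negCount_Psi (s : Fin n → ℕ) (ε : Fin n → Bool) :
    negCount (Psi s ε) = (Finset.univ.filter fun k => ε k = true).card := by
  unfold negCount Psi
  simp only [psi_neg_iff]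

lemma monomOf_comp (π : Equiv.Perm (Fin n)) (f : Fin n → ℤ) :
    monomOf (fun a => f (π a)) = monomOf f := by
  unfold monomOf
  exact Equiv.sum_comp π (fun i => Finsupp.single ((f i).natAbs - 1) 1)

lemma negCount_comp (π : Equiv.Perm (Fin n)) (f : Fin n → ℤ) :
    negCount (fun a => f (π a)) = negCount f := by
  unfold negCount
  rw [Finset.card_filter, Finset.card_filter]
  exact Equiv.sum_comp π (fun i => if f i < 0 then 1 else 0)

lemma mono_of_adj {t : Fin n → ℕ}
    (h : ∀ a : ℕ, ∀ h2 : a + 1 < n, t ⟨a, Nat.lt_of_succ_lt h2⟩ ≤ t ⟨a + 1, h2⟩) :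
    Monotone t := by
  have key : ∀ m : ℕ, ∀ hm : m < n, ∀ i : Fin n, (i : ℕ) ≤ m → t i ≤ t ⟨m, hm⟩ := by
    intro m
    induction m with
    | zero =>
      intro hm i hi
      have : i = ⟨0, hm⟩ := Fin.ext (show (i : ℕ) = 0 by omega)
      rw [this]
    | succ m ih =>
      intro hm i hi
      rcases Nat.eq_or_lt_of_le hi with he | hlt
      · have : i = ⟨m + 1, hm⟩ := Fin.ext he
        rw [this]
      · exact le_trans (ih (Nat.lt_of_succ_lt hm) i (Nat.lt_succ_iff.mp hlt)) (h m hm)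
  intro i j hij
  have := key (j : ℕ) j.isLt i hij
  rwa [Fin.eta] at this

def forcedF (π : Equiv.Perm (Fin n)) (s : Fin n → ℕ) (k : Fin n) : Prop :=
  1 ≤ (k : ℕ) ∧ ¬ dsc π ((k : ℕ) - 1) ∧
    ∀ h : (k : ℕ) - 1 < n, s ⟨(k : ℕ) - 1, h⟩ = s k

def forcedT (π : Equiv.Perm (Fin n)) (s : Fin n → ℕ) (k : Fin n) : Prop :=
  (k : ℕ) + 1 < n ∧ dsc π (k : ℕ) ∧
    ∀ h : (k : ℕ) + 1 < n, s k = s ⟨(k : ℕ) + 1, h⟩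

lemma mono_const {s : Fin n → ℕ} (hmono : Monotone s) {k k' : Fin n}
    (heq : s k = s k') {m : ℕ} (h1 : (k : ℕ) ≤ m) (hm : m < n) (h2 : m ≤ (k' : ℕ)) :
    s ⟨m, hm⟩ = s k := by
  have l1 : s k ≤ s ⟨m, hm⟩ := hmono (show k ≤ ⟨m, hm⟩ from h1)
  have l2 : s ⟨m, hm⟩ ≤ s k' := hmono (show (⟨m, hm⟩ : Fin n) ≤ k' from h2)
  omega

lemma not_FT (π : Equiv.Perm (Fin n)) (s : Fin n → ℕ)
    (hpeak : ∀ j ∈ PeakPerm π, ∀ (h0 : j - 2 < n) (h2 : j < n), s ⟨j - 2, h0⟩ < s ⟨j, h2⟩)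
    (k : Fin n) : ¬ (forcedF π s k ∧ forcedT π s k) := by
  rintro ⟨⟨h1, hnd, he1⟩, ⟨h2, hd, he2⟩⟩
  have hk := k.isLt
  have hasc := asc_of_not_dsc π (show ((k : ℕ) - 1) + 1 < n by omega) hnd
  have ek : (⟨(k : ℕ) - 1 + 1, show ((k : ℕ) - 1) + 1 < n by omega⟩ : Fin n) = k :=
    Fin.ext (show (k : ℕ) - 1 + 1 = (k : ℕ) by omega)
  rw [ek] at hasc
  have hmem : (k : ℕ) + 1 ∈ PeakPerm π := by
    have hA : π ⟨(k : ℕ) + 1 - 2, by omega⟩ < π ⟨(k : ℕ) + 1 - 1, by omega⟩ := hasc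
    have hB : π ⟨(k : ℕ) + 1, h2⟩ < π ⟨(k : ℕ) + 1 - 1, by omega⟩ := by
      obtain ⟨p1, p2, hlt⟩ := hd
      exact hlt
    unfold PeakPerm
    rw [Finset.mem_filter, Finset.mem_range]
    exact ⟨h2, by omega, by omega, h2, by omega, hA, hB⟩
  have hpk := hpeak _ hmem (by omega) h2
  have e1 : s ⟨(k : ℕ) + 1 - 2, by omega⟩ = s ⟨(k : ℕ) - 1, by omega⟩ := rfl
  have e2 := he1 (by omega : (k : ℕ) - 1 < n)
  have e3 := he2 h2
  rw [e1, e2, e3] at hpk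
  exact lt_irrefl _ hpk

lemma forcedF_mk (π : Equiv.Perm (Fin n)) (s : Fin n → ℕ) {a : ℕ} (h2 : a + 1 < n)
    (hnd : ¬ dsc π a) (he : s ⟨a, Nat.lt_of_succ_lt h2⟩ = s ⟨a + 1, h2⟩) :
    forcedF π s ⟨a + 1, h2⟩ := by
  refine ⟨Nat.le_add_left 1 a, hnd, fun h => he⟩

lemma chainF (π : Equiv.Perm (Fin n)) (s : Fin n → ℕ) (hmono : Monotone s)
    (hdisj : ∀ k, ¬ (forcedF π s k ∧ forcedT π s k))
    {k k' : Fin n} (hlt : (k : ℕ) < (k' : ℕ)) (heq : s k = s k')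
    (hfT : ¬ forcedT π s k) :
    ∀ t : ℕ, ∀ h : (k : ℕ) + 1 + t ≤ (k' : ℕ),
      forcedF π s ⟨(k : ℕ) + 1 + t, lt_of_le_of_lt h k'.isLt⟩ := by
  have hbase : ∀ m : ℕ, ∀ hmn : m + 1 < n, (k : ℕ) ≤ m → m < (k' : ℕ) → ¬ dsc π m →
      forcedF π s ⟨m + 1, hmn⟩ := by
    intro m hmn hm1 hm2 hnd
    refine forcedF_mk π s hmn hnd ?_
    have ea : s ⟨m, Nat.lt_of_succ_lt hmn⟩ = s k :=
      mono_const hmono heq hm1 (Nat.lt_of_succ_lt hmn) (le_of_lt hm2)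
    have eb : s ⟨m + 1, hmn⟩ = s k := mono_const hmono heq (by omega) hmn hm2
    rw [ea, eb]
  have hnd0 : ∀ m : ℕ, ∀ hm : m < n, m + 1 < n → (k : ℕ) ≤ m → m < (k' : ℕ) →
      forcedF π s ⟨m, hm⟩ → ¬ dsc π m := by
    intro m hm hmn hm1 hm2 hF hd
    refine hdisj ⟨m, hm⟩ ⟨hF, hmn, hd, fun h => ?_⟩
    have h' : m + 1 < n := h
    show s ⟨m, hm⟩ = s ⟨m + 1, h'⟩
    have ea : s ⟨m, hm⟩ = s k := mono_const hmono heq hm1 hm (le_of_lt hm2)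
    have eb : s ⟨m + 1, h'⟩ = s k := mono_const hmono heq (by omega) h' hm2
    rw [ea, eb]
  intro t
  induction t with
  | zero =>
    intro h
    have hndk : ¬ dsc π (k : ℕ) := by
      intro hd
      refine hfT ⟨by omega, hd, fun h' => ?_⟩
      have eb : s ⟨(k : ℕ) + 1, h'⟩ = s k := mono_const hmono heq (by omega) h' (by omega)
      rw [eb]
    exact hbase (k : ℕ) (lt_of_le_of_lt h k'.isLt) (le_refl _) (by omega) hndk
  | succ t ih =>
    intro h
    have hprev : (k : ℕ) + 1 + t ≤ (k' : ℕ) := by omega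
    have hF := ih hprev
    have hnd : ¬ dsc π ((k : ℕ) + 1 + t) :=
      hnd0 _ (lt_of_le_of_lt hprev k'.isLt) (lt_of_le_of_lt h k'.isLt) (by omega) (by omega) hF
    exact hbase ((k : ℕ) + 1 + t) (lt_of_le_of_lt h k'.isLt) (by omega) (by omega) hnd

lemma chainT (π : Equiv.Perm (Fin n)) (s : Fin n → ℕ) {v : ℕ} (p : Fin n) (hp : s p = v)
    (hmin : ∀ k : Fin n, s k = v → (p : ℕ) ≤ (k : ℕ))
    (hall : ∀ k : Fin n, s k = v → forcedF π s k ∨ forcedT π s k) :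
    ∀ t : ℕ, ∃ h : (p : ℕ) + t < n, s ⟨(p : ℕ) + t, h⟩ = v ∧ forcedT π s ⟨(p : ℕ) + t, h⟩ := by
  intro t
  induction t with
  | zero =>
    have h0 : (p : ℕ) + 0 < n := by have := p.isLt; omega
    have e0 : (⟨(p : ℕ) + 0, h0⟩ : Fin n) = p := Fin.ext rfl
    refine ⟨h0, ?_, ?_⟩
    · rw [e0]; exact hp
    · rw [e0]
      rcases hall p hp with hF | hT
      · exfalso
        obtain ⟨h1, -, he⟩ := hF
        have hm : (p : ℕ) - 1 < n := by have := p.isLt; omega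
        have hv' : s ⟨(p : ℕ) - 1, hm⟩ = v := (he hm).trans hp
        have h3 : (p : ℕ) ≤ (p : ℕ) - 1 := hmin _ hv'
        omega
      · exact hT
  | succ t ih =>
    obtain ⟨hlt, hv, hT⟩ := ih
    obtain ⟨h2', hd, he⟩ := hT
    have h2 : (p : ℕ) + t + 1 < n := h2'
    have hnext : s ⟨(p : ℕ) + t + 1, h2⟩ = v := by
      have e : s ⟨(p : ℕ) + t + 1, h2⟩ = s ⟨(p : ℕ) + t, hlt⟩ := (he h2).symm
      rw [e]; exact hv
    refine ⟨h2, hnext, ?_⟩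
    rcases hall _ hnext with hF | hT'
    · exfalso
      obtain ⟨-, hnd, -⟩ := hF
      exact hnd hd
    · exact hT'

lemma cardFree_eq (π : Equiv.Perm (Fin n)) (s : Fin n → ℕ) (hmono : Monotone s)
    (hdisj : ∀ k, ¬ (forcedF π s k ∧ forcedT π s k)) :
    (Finset.univ.filter fun k => ¬ forcedF π s k ∧ ¬ forcedT π s k).card =
      (Finset.univ.image s).card := by
  apply Finset.card_bij (fun k _ => s k)
  · intro k hk
    exact Finset.mem_image_of_mem s (Finset.mem_univ k)
  · intro k1 hk1 k2 hk2 hval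
    rw [Finset.mem_filter] at hk1 hk2
    have main : ∀ a b : Fin n, (a : ℕ) < (b : ℕ) → s a = s b →
        (¬ forcedF π s a ∧ ¬ forcedT π s a) → (¬ forcedF π s b ∧ ¬ forcedT π s b) → False := by
      intro a b hab heq hfa hfb
      have hle : (a : ℕ) + 1 + ((b : ℕ) - (a : ℕ) - 1) ≤ (b : ℕ) := by omega
      have hc := chainF π s hmono hdisj hab heq hfa.2 ((b : ℕ) - (a : ℕ) - 1) hle
      have e : (⟨(a : ℕ) + 1 + ((b : ℕ) - (a : ℕ) - 1), lt_of_le_of_lt hle b.isLt⟩ : Fin n) = b :=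
        Fin.ext (show (a : ℕ) + 1 + ((b : ℕ) - (a : ℕ) - 1) = (b : ℕ) by omega)
      rw [e] at hc
      exact hfb.1 hc
    rcases Nat.lt_trichotomy (k1 : ℕ) (k2 : ℕ) with h | h | h
    · exact absurd (main k1 k2 h hval hk1.2 hk2.2) not_false
    · exact Fin.ext h
    · exact absurd (main k2 k1 h hval.symm hk2.2 hk1.2) not_false
  · intro v hv
    rw [Finset.mem_image] at hv
    obtain ⟨k0, -, hk0⟩ := hv
    have hne : (Finset.univ.filter (fun k : Fin n => s k = v)).Nonempty :=
      ⟨k0, Finset.mem_filter.mpr ⟨Finset.mem_univ _, hk0⟩⟩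
    set p := (Finset.univ.filter (fun k : Fin n => s k = v)).min' hne with hpdef
    have hpv : s p = v := by
      have := (Finset.univ.filter (fun k : Fin n => s k = v)).min'_mem hne
      rw [Finset.mem_filter] at this
      exact this.2
    have hmin : ∀ k : Fin n, s k = v → (p : ℕ) ≤ (k : ℕ) := by
      intro k hk
      exact Finset.min'_le _ k (Finset.mem_filter.mpr ⟨Finset.mem_univ _, hk⟩)
    by_contra hno
    push_neg at hno
    have hall : ∀ k : Fin n, s k = v → forcedF π s k ∨ forcedT π s k := by
      intro k hk
      by_contra hcon
      push_neg at hcon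
      exact hno k (Finset.mem_filter.mpr ⟨Finset.mem_univ _, hcon.1, hcon.2⟩) hk
    obtain ⟨h, -, -⟩ := chainT π s p hpv hmin hall n
    omega

lemma cardT_eq (π : Equiv.Perm (Fin n)) (s : Fin n → ℕ) :
    (Finset.univ.filter fun k => forcedT π s k).card =
      ((Finset.range n).filter fun j => j ∈ DesPerm π ∧
        ∀ (h1 : j - 1 < n) (h2 : j < n), s ⟨j - 1, h1⟩ = s ⟨j, h2⟩).card := by
  apply Finset.card_bij (fun (k : Fin n) (_ : k ∈ Finset.univ.filter fun k => forcedT π s k) => (k : ℕ) + 1)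
  · intro k hk
    rw [Finset.mem_filter] at hk
    obtain ⟨-, h2, hd, he⟩ := hk
    rw [Finset.mem_filter, Finset.mem_range]
    refine ⟨h2, ?_, ?_⟩
    · unfold DesPerm
      rw [Finset.mem_filter, Finset.mem_range]
      have hB : π ⟨(k : ℕ) + 1, h2⟩ < π ⟨(k : ℕ) + 1 - 1, by omega⟩ := by
        obtain ⟨p1, p2, hlt⟩ := hd
        exact hlt
      exact ⟨h2, by omega, h2, by omega, hB⟩
    · intro hh1 hh2
      exact he hh2
  · intro a ha b hb hab
    exact Fin.ext (by omega)
  · intro j hj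
    rw [Finset.mem_filter, Finset.mem_range] at hj
    obtain ⟨hjn, hdes, heq⟩ := hj
    unfold DesPerm at hdes
    rw [Finset.mem_filter, Finset.mem_range] at hdes
    obtain ⟨-, hh1, hh2, hge1, hlt⟩ := hdes
    have hj1 : j - 1 < n := hh1
    refine ⟨⟨j - 1, hj1⟩, ?_, ?_⟩
    · rw [Finset.mem_filter]
      have hs1 : j - 1 + 1 < n := by omega
      refine ⟨Finset.mem_univ _, hs1, ?_, ?_⟩
      · show dsc π (j - 1)
        refine ⟨hj1, hs1, ?_⟩
        have e : (⟨j - 1 + 1, hs1⟩ : Fin n) = ⟨j, hh2⟩ := Fin.ext (show j - 1 + 1 = j by omega)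
        rw [e]
        exact hlt
      · intro h
        have h' : j - 1 + 1 < n := h
        show s ⟨j - 1, hj1⟩ = s ⟨j - 1 + 1, h'⟩
        have e : (⟨j - 1 + 1, h'⟩ : Fin n) = ⟨j, hh2⟩ := Fin.ext (show j - 1 + 1 = j by omega)
        rw [e]
        exact heq hj1 hh2
    · show j - 1 + 1 = j
      omega

lemma adjOK_Psi_iff (π : Equiv.Perm (Fin n)) (s : Fin n → ℕ) (ε : Fin n → Bool)
    (hmono : Monotone s) :
    AdjOK π (Psi s ε) ↔
      ∀ k : Fin n, (forcedF π s k → ε k = false) ∧ (forcedT π s k → ε k = true) := by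
  constructor
  · rintro ⟨-, hstep⟩ k
    have hk := k.isLt
    constructor
    · rintro ⟨h1, hnd, he⟩
      have h2 : ((k : ℕ) - 1) + 1 < n := by omega
      have hr := (hstep ((k : ℕ) - 1) h2).2 hnd
      have ek : (⟨(k : ℕ) - 1 + 1, h2⟩ : Fin n) = k := Fin.ext (show (k:ℕ) - 1 + 1 = (k:ℕ) by omega)
      rw [ek] at hr
      simp only [Psi] at hr
      rw [Rp_psi] at hr
      have he' := he (Nat.lt_of_succ_lt h2)
      rcases hr with hr | hr
      · omega
      · exact hr.2
    · rintro ⟨h2, hd, he⟩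
      have hr := (hstep (k : ℕ) h2).1 hd
      have ek : (⟨(k : ℕ), Nat.lt_of_succ_lt h2⟩ : Fin n) = k := Fin.ext rfl
      rw [ek] at hr
      simp only [Psi] at hr
      rw [Rm_psi] at hr
      have he' := he h2
      rcases hr with hr | hr
      · omega
      · exact hr.2
  · intro hv
    refine ⟨fun i => psi_ne_zero _ _, fun a h2 => ?_⟩
    have ha : a < n := Nat.lt_of_succ_lt h2
    have hle : s ⟨a, ha⟩ ≤ s ⟨a + 1, h2⟩ := hmono (Fin.mk_le_mk.mpr (Nat.le_succ a))
    constructor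
    · intro hd
      show Rm (psi (ε ⟨a, ha⟩) (s ⟨a, ha⟩)) (psi (ε ⟨a + 1, h2⟩) (s ⟨a + 1, h2⟩))
      rw [Rm_psi]
      rcases Nat.lt_or_ge (s ⟨a, ha⟩) (s ⟨a + 1, h2⟩) with hlt | hge
      · exact Or.inl hlt
      · have heq : s ⟨a, ha⟩ = s ⟨a + 1, h2⟩ := le_antisymm hle hge
        refine Or.inr ⟨heq, (hv ⟨a, ha⟩).2 ⟨h2, hd, fun h => heq⟩⟩
    · intro hnd
      show Rp (psi (ε ⟨a, ha⟩) (s ⟨a, ha⟩)) (psi (ε ⟨a + 1, h2⟩) (s ⟨a + 1, h2⟩))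
      rw [Rp_psi]
      rcases Nat.lt_or_ge (s ⟨a, ha⟩) (s ⟨a + 1, h2⟩) with hlt | hge
      · exact Or.inl hlt
      · have heq : s ⟨a, ha⟩ = s ⟨a + 1, h2⟩ := le_antisymm hle hge
        refine Or.inr ⟨heq, (hv ⟨a + 1, h2⟩).1 ⟨Nat.le_add_left 1 a, hnd, fun h => heq⟩⟩

lemma sum_eps (q : ℂ) (π : Equiv.Perm (Fin n)) (s : Fin n → ℕ)
    (hdisj : ∀ k, ¬ (forcedF π s k ∧ forcedT π s k)) :
    (∑ ε : Fin n → Bool,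
        if (∀ k : Fin n, (forcedF π s k → ε k = false) ∧ (forcedT π s k → ε k = true))
          then q ^ (Finset.univ.filter fun k => ε k = true).card else 0) =
      q ^ (Finset.univ.filter fun k => forcedT π s k).card *
        (q + 1) ^ (Finset.univ.filter fun k => ¬ forcedF π s k ∧ ¬ forcedT π s k).card := by
  have step1 : ∀ ε : Fin n → Bool,
      (if (∀ k : Fin n, (forcedF π s k → ε k = false) ∧ (forcedT π s k → ε k = true))
          then q ^ (Finset.univ.filter fun k => ε k = true).card else 0) =
      ∏ k : Fin n, ((if ((forcedF π s k → ε k = false) ∧ (forcedT π s k → ε k = true))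
          then 1 else 0) * (if ε k = true then q else 1)) := by
    intro ε
    rw [Finset.prod_mul_distrib, Finset.prod_boole]
    have hq : q ^ (Finset.univ.filter fun k => ε k = true).card
        = ∏ k : Fin n, (if ε k = true then q else 1) := by
      rw [← Finset.prod_filter, Finset.prod_const]
    by_cases hv : ∀ k : Fin n, (forcedF π s k → ε k = false) ∧ (forcedT π s k → ε k = true)
    · rw [if_pos hv, if_pos (fun i _ => hv i), hq, one_mul]
    · rw [if_neg hv, if_neg, zero_mul]
      intro hvv
      exact hv (fun i => hvv i (Finset.mem_univ i))
  rw [Finset.sum_congr rfl (fun ε _ => step1 ε)]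
  have swap : (∑ ε : Fin n → Bool, ∏ k : Fin n,
      ((if ((forcedF π s k → ε k = false) ∧ (forcedT π s k → ε k = true)) then 1 else 0) *
        (if ε k = true then q else 1))) =
      ∏ k : Fin n, ∑ b : Bool,
        ((if ((forcedF π s k → b = false) ∧ (forcedT π s k → b = true)) then 1 else 0) *
          (if b = true then q else 1)) := by
    rw [Finset.prod_univ_sum, Fintype.piFinset_univ]
  rw [swap]
  have hval : ∀ k : Fin n,
      (∑ b : Bool, ((if ((forcedF π s k → b = false) ∧ (forcedT π s k → b = true))
          then 1 else 0) * (if b = true then q else 1))) =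
      if forcedT π s k then q else if forcedF π s k then 1 else (q + 1) := by
    intro k
    rw [Fintype.sum_bool]
    by_cases hT : forcedT π s k <;> by_cases hF : forcedF π s k
    · exact absurd ⟨hF, hT⟩ (hdisj k)
    · simp [hT, hF]
    · simp [hT, hF]
    · simp [hT, hF]
  rw [Finset.prod_congr rfl (fun k _ => hval k)]
  rw [← Finset.prod_filter_mul_prod_filter_not Finset.univ (fun k => forcedT π s k)]
  have e1 : (∏ k ∈ Finset.univ.filter (fun k => forcedT π s k),
      (if forcedT π s k then q else if forcedF π s k then 1 else (q + 1))) =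
      q ^ (Finset.univ.filter fun k => forcedT π s k).card := by
    rw [← Finset.prod_const]
    apply Finset.prod_congr rfl
    intro k hk
    rw [Finset.mem_filter] at hk
    rw [if_pos hk.2]
  have e2 : (∏ k ∈ Finset.univ.filter (fun k => ¬ forcedT π s k),
      (if forcedT π s k then q else if forcedF π s k then 1 else (q + 1))) =
      (q + 1) ^ (Finset.univ.filter fun k => ¬ forcedF π s k ∧ ¬ forcedT π s k).card := by
    rw [← Finset.prod_filter_mul_prod_filter_not
      (Finset.univ.filter (fun k => ¬ forcedT π s k)) (fun k => forcedF π s k)]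
    have ea : (∏ k ∈ (Finset.univ.filter (fun k => ¬ forcedT π s k)).filter
        (fun k => forcedF π s k),
        (if forcedT π s k then q else if forcedF π s k then 1 else (q + 1))) = 1 := by
      apply Finset.prod_eq_one
      intro k hk
      rw [Finset.mem_filter, Finset.mem_filter] at hk
      rw [if_neg hk.1.2, if_pos hk.2]
    have eb : (∏ k ∈ (Finset.univ.filter (fun k => ¬ forcedT π s k)).filter
        (fun k => ¬ forcedF π s k),
        (if forcedT π s k then q else if forcedF π s k then 1 else (q + 1))) =
        (q + 1) ^ (Finset.univ.filter fun k => ¬ forcedF π s k ∧ ¬ forcedT π s k).card := by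
      rw [← Finset.prod_const]
      apply Finset.prod_bij (fun k _ => k)
      · intro k hk
        rw [Finset.mem_filter, Finset.mem_filter] at hk
        rw [Finset.mem_filter]
        exact ⟨Finset.mem_univ _, hk.2, hk.1.2⟩
      · intro a _ b _ h; exact h
      · intro b hb
        rw [Finset.mem_filter] at hb
        refine ⟨b, ?_, rfl⟩
        rw [Finset.mem_filter, Finset.mem_filter]
        exact ⟨⟨Finset.mem_univ _, hb.2.2⟩, hb.2.1⟩
      · intro k hk
        rw [Finset.mem_filter, Finset.mem_filter] at hk
        rw [if_neg hk.1.2, if_neg hk.2]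
    rw [ea, eb, one_mul]
  rw [e1, e2]

lemma inner_eq (q : ℂ) (d : ℕ →₀ ℕ) (π : Equiv.Perm (Fin n)) (s : Fin n → ℕ) :
    (∑ ε : Fin n → Bool,
        if AdjOK π (Psi s ε) ∧ monomOf (Psi s ε) = d then q ^ negCount (Psi s ε) else 0) =
      if (Monotone s ∧ (∀ j ∈ PeakPerm π, ∀ (h0 : j - 2 < n) (h2 : j < n),
              s ⟨j - 2, h0⟩ < s ⟨j, h2⟩) ∧ (∑ j, Finsupp.single (s j) 1) = d)
        then q ^ ((Finset.range n).filter (fun j => j ∈ DesPerm π ∧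
              ∀ (h1 : j - 1 < n) (h2 : j < n), s ⟨j - 1, h1⟩ = s ⟨j, h2⟩)).card *
          (q + 1) ^ (Finset.univ.image s).card
        else 0 := by
  by_cases hm : (∑ j, Finsupp.single (s j) 1) = d
  swap
  · rw [if_neg (by tauto)]
    apply Finset.sum_eq_zero
    intro ε _
    rw [if_neg]
    rw [monomOf_Psi]
    tauto
  by_cases hmono : Monotone s
  swap
  · rw [if_neg (by tauto)]
    apply Finset.sum_eq_zero
    intro ε _
    rw [if_neg]
    rintro ⟨hAdj, -⟩
    apply hmono
    apply mono_of_adj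
    intro a h2
    have hp := hAdj.2 a h2
    by_cases hd : dsc π a
    · have hr := hp.1 hd
      simp only [Psi] at hr
      rw [Rm_psi] at hr
      rcases hr with hr | hr
      · exact le_of_lt hr
      · exact le_of_eq hr.1
    · have hr := hp.2 hd
      simp only [Psi] at hr
      rw [Rp_psi] at hr
      rcases hr with hr | hr
      · exact le_of_lt hr
      · exact le_of_eq hr.1
  by_cases hpk : ∀ j ∈ PeakPerm π, ∀ (h0 : j - 2 < n) (h2 : j < n), s ⟨j - 2, h0⟩ < s ⟨j, h2⟩
  swap
  · rw [if_neg (by tauto)]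
    apply Finset.sum_eq_zero
    intro ε _
    rw [if_neg]
    rintro ⟨hAdj, -⟩
    push_neg at hpk
    obtain ⟨j, hjmem, h0, h2, hge⟩ := hpk
    have hjm := hjmem
    unfold PeakPerm at hjm
    rw [Finset.mem_filter, Finset.mem_range] at hjm
    obtain ⟨-, hh0, hh1, hh2, hge2, hA, hB⟩ := hjm
    have m1 : s ⟨j - 2, hh0⟩ ≤ s ⟨j - 1, hh1⟩ :=
      hmono (Fin.mk_le_mk.mpr (by omega))
    have m2 : s ⟨j - 1, hh1⟩ ≤ s ⟨j, hh2⟩ :=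
      hmono (Fin.mk_le_mk.mpr (by omega))
    have m3 : s ⟨j, h2⟩ ≤ s ⟨j - 2, h0⟩ := hge
    have e1 : s ⟨j - 2, hh0⟩ = s ⟨j - 1, hh1⟩ := by
      have b1 : s ⟨j, h2⟩ = s ⟨j, hh2⟩ := rfl
      have b2 : s ⟨j - 2, h0⟩ = s ⟨j - 2, hh0⟩ := rfl
      omega
    have e2 : s ⟨j - 1, hh1⟩ = s ⟨j, hh2⟩ := by
      have b1 : s ⟨j, h2⟩ = s ⟨j, hh2⟩ := rfl
      have b2 : s ⟨j - 2, h0⟩ = s ⟨j - 2, hh0⟩ := rfl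
      omega
    have hv := (adjOK_Psi_iff π s ε hmono).mp hAdj ⟨j - 1, hh1⟩
    have hs1 : j - 1 + 1 < n := by omega
    have eA : (⟨j - 2 + 1, by omega⟩ : Fin n) = ⟨j - 1, hh1⟩ :=
      Fin.ext (show j - 2 + 1 = j - 1 by omega)
    have eB : (⟨j - 1 + 1, hs1⟩ : Fin n) = ⟨j, hh2⟩ :=
      Fin.ext (show j - 1 + 1 = j by omega)
    have hFF : forcedF π s ⟨j - 1, hh1⟩ := by
      refine ⟨by show 1 ≤ j - 1; omega, ?_, ?_⟩
      · show ¬ dsc π (j - 1 - 1)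
        have hA' : π ⟨j - 2, hh0⟩ < π ⟨j - 2 + 1, by omega⟩ := by
          rw [eA]; exact hA
        exact not_dsc_of_asc π hA'
      · intro h
        show s ⟨j - 1 - 1, h⟩ = s ⟨j - 1, hh1⟩
        have b : s ⟨j - 1 - 1, h⟩ = s ⟨j - 2, hh0⟩ := by
          have e : (⟨j - 1 - 1, h⟩ : Fin n) = ⟨j - 2, hh0⟩ :=
            Fin.ext (show j - 1 - 1 = j - 2 by omega)
          rw [e]
        rw [b]; exact e1
    have hTT : forcedT π s ⟨j - 1, hh1⟩ := by
      refine ⟨hs1, ?_, ?_⟩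
      · show dsc π (j - 1)
        refine ⟨hh1, hs1, ?_⟩
        rw [eB]
        exact hB
      · intro h
        have h' : j - 1 + 1 < n := h
        show s ⟨j - 1, hh1⟩ = s ⟨j - 1 + 1, h'⟩
        have e : (⟨j - 1 + 1, h'⟩ : Fin n) = ⟨j, hh2⟩ :=
          Fin.ext (show j - 1 + 1 = j by omega)
        rw [e]; exact e2
    have hfalse := hv.1 hFF
    have htrue := hv.2 hTT
    rw [hfalse] at htrue
    exact Bool.false_ne_true htrue
  · rw [if_pos ⟨hmono, hpk, hm⟩]
    have hdisj := not_FT π s hpk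
    have hcong : ∀ ε : Fin n → Bool,
        (if AdjOK π (Psi s ε) ∧ monomOf (Psi s ε) = d then q ^ negCount (Psi s ε) else 0) =
        (if (∀ k : Fin n, (forcedF π s k → ε k = false) ∧ (forcedT π s k → ε k = true))
          then q ^ (Finset.univ.filter fun k => ε k = true).card else 0) := by
      intro ε
      rw [negCount_Psi]
      apply if_congr _ rfl rfl
      rw [monomOf_Psi]
      constructor
      · rintro ⟨hAdj, -⟩
        exact (adjOK_Psi_iff π s ε hmono).mp hAdj
      · intro hvv
        exact ⟨(adjOK_Psi_iff π s ε hmono).mpr hvv, hm⟩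
    rw [Finset.sum_congr rfl (fun ε _ => hcong ε)]
    rw [sum_eps q π s hdisj]
    rw [cardT_eq π s, cardFree_eq π s hmono hdisj]

end LqAux

set_option maxHeartbeats 2000000

open LqAux in
/-- the explicit monomial expansion of `L^{(q)}_π`.  Here a weakly
increasing sequence `i_1 ≤ ⋯ ≤ i_n` of positive integers is encoded as a monotone
map `s : Fin n → ℕ`, the `j`-th (1-indexed) term of the sequence being `i_j = s (j-1) + 1`,
so that `x_{i_j}` is the variable indexed by `s (j-1)`. -/
theorem Lq_eq_peak_expansion (q : ℂ) (n : ℕ) (π : Equiv.Perm (Fin n)) :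
    Lq q π =
      (fun d => ∑' s : {s : Fin n → ℕ // Monotone s ∧
          ∀ j ∈ PeakPerm π, ∀ (h0 : j - 2 < n) (h2 : j < n), s ⟨j - 2, h0⟩ < s ⟨j, h2⟩},
        if (∑ j, Finsupp.single (s.1 j) 1) = d then
          q ^ ((Finset.range n).filter (fun j => j ∈ DesPerm π ∧
                ∀ (h1 : j - 1 < n) (h2 : j < n), s.1 ⟨j - 1, h1⟩ = s.1 ⟨j, h2⟩)).card
          * (q + 1) ^ (Finset.univ.image s.1).card
        else 0 : MvPowerSeries ℕ ℂ) := by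
  funext d
  show (∑' f : {f : Fin n → ℤ // IsEnriched (permOrd π) f},
      if monomOf f.1 = d then q ^ negCount f.1 else 0) =
    (∑' s : {s : Fin n → ℕ // Monotone s ∧
        ∀ j ∈ PeakPerm π, ∀ (h0 : j - 2 < n) (h2 : j < n), s ⟨j - 2, h0⟩ < s ⟨j, h2⟩},
      if (∑ j, Finsupp.single (s.1 j) 1) = d then
        q ^ ((Finset.range n).filter (fun j => j ∈ DesPerm π ∧
              ∀ (h1 : j - 1 < n) (h2 : j < n), s.1 ⟨j - 1, h1⟩ = s.1 ⟨j, h2⟩)).card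
        * (q + 1) ^ (Finset.univ.image s.1).card
      else 0)
  obtain ⟨M, hM⟩ : ∃ M : ℕ, M = d.support.sup id + 1 := ⟨_, rfl⟩
  have keyN : ∀ (s : Fin n → ℕ), (∑ j, Finsupp.single (s j) 1) = d → ∀ j, s j < M := by
    intro s hs j
    have h1 : (1 : ℕ) ≤ (∑ i, (Finsupp.single (s i) 1 : ℕ →₀ ℕ)) (s j) := by
      rw [Finsupp.finset_sum_apply]
      have hle := Finset.single_le_sum
        (f := fun i => (Finsupp.single (s i) 1 : ℕ →₀ ℕ) (s j))
        (fun i _ => Nat.zero_le _) (Finset.mem_univ j)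
      simpa using hle
    rw [hs] at h1
    have hsup : s j ∈ d.support := Finsupp.mem_support_iff.mpr (by omega)
    have hle2 := Finset.le_sup (f := id) hsup
    simp only [id_eq] at hle2
    omega
  have keyZ : ∀ (f : Fin n → ℤ), (∀ i, f i ≠ 0) → monomOf f = d →
      ∀ i, f i ∈ Finset.Icc (-(M : ℤ)) (M : ℤ) := by
    intro f h0 hmm i
    have h1 : (f i).natAbs - 1 < M := keyN (fun i => (f i).natAbs - 1) hmm i
    have h2 : (f i).natAbs ≠ 0 := Int.natAbs_ne_zero.mpr (h0 i)
    rw [Finset.mem_Icc]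
    omega
  calc (∑' f : {f : Fin n → ℤ // IsEnriched (permOrd π) f},
        if monomOf f.1 = d then q ^ negCount f.1 else 0)
      = ∑' g : Fin n → ℤ, Set.indicator {x : Fin n → ℤ | IsEnriched (permOrd π) x}
          (fun g => if monomOf g = d then q ^ negCount g else 0) g :=
        tsum_subtype {x : Fin n → ℤ | IsEnriched (permOrd π) x}
          (fun g => if monomOf g = d then q ^ negCount g else 0)
    _ = ∑' g : Fin n → ℤ,
          (if IsEnriched (permOrd π) g ∧ monomOf g = d then q ^ negCount g else 0) := by
        apply tsum_congr
        intro g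
        rw [Set.indicator_apply]
        by_cases h : IsEnriched (permOrd π) g
        · simp [h]
        · simp [h]
    _ = ∑ g ∈ Fintype.piFinset (fun _ : Fin n => Finset.Icc (-(M : ℤ)) (M : ℤ)),
          (if IsEnriched (permOrd π) g ∧ monomOf g = d then q ^ negCount g else 0) := by
        apply tsum_eq_sum
        intro g hg
        rw [if_neg]
        rintro ⟨hE, hmm⟩
        exact hg (Fintype.mem_piFinset.mpr (keyZ g hE.1 hmm))
    _ = ∑ g ∈ Fintype.piFinset (fun _ : Fin n => Finset.Icc (-(M : ℤ)) (M : ℤ)),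
          (if AdjOK π g ∧ monomOf g = d then q ^ negCount g else 0) := by
        refine Finset.sum_bij' (fun f _ => fun a => f (π a)) (fun g _ => fun i => g (π.symm i))
          ?_ ?_ ?_ ?_ ?_
        · intro f hf
          rw [Fintype.mem_piFinset] at hf ⊢
          intro a; exact hf (π a)
        · intro g hg
          rw [Fintype.mem_piFinset] at hg ⊢
          intro i; exact hg (π.symm i)
        · intro f hf
          funext i
          simp
        · intro g hg
          funext a
          simp
        · intro f hf
          by_cases hc : IsEnriched (permOrd π) f ∧ monomOf f = d
          · rw [if_pos hc, if_pos, negCount_comp]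
            exact ⟨(isEnriched_iff π f).mp hc.1, by rw [monomOf_comp]; exact hc.2⟩
          · rw [if_neg hc, if_neg]
            rintro ⟨hA, hmm⟩
            rw [monomOf_comp] at hmm
            exact hc ⟨(isEnriched_iff π f).mpr hA, hmm⟩
    _ = ∑ g ∈ (Fintype.piFinset (fun _ : Fin n => Finset.Icc (-(M : ℤ)) (M : ℤ))).filter
          (fun g => ∀ i, g i ≠ 0),
          (if AdjOK π g ∧ monomOf g = d then q ^ negCount g else 0) := by
        refine (Finset.sum_subset (Finset.filter_subset _ _) ?_).symm
        intro g hg hng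
        rw [if_neg]
        rintro ⟨hA, -⟩
        exact hng (Finset.mem_filter.mpr ⟨hg, hA.1⟩)
    _ = ∑ p ∈ (Fintype.piFinset (fun _ : Fin n => Finset.range M)) ×ˢ
          (Finset.univ : Finset (Fin n → Bool)),
          (if AdjOK π (Psi p.1 p.2) ∧ monomOf (Psi p.1 p.2) = d
            then q ^ negCount (Psi p.1 p.2) else 0) := by
        have hPsiInv : ∀ g : Fin n → ℤ, (∀ i, g i ≠ 0) →
            Psi (fun k => (g k).natAbs - 1) (fun k => decide (g k < 0)) = g := by
          intro g h0
          funext k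
          have := h0 k
          unfold Psi psi
          by_cases hneg : g k < 0 <;> simp [hneg] <;> omega
        refine Finset.sum_bij'
          (fun g _ => (fun k => (g k).natAbs - 1, fun k => decide (g k < 0)))
          (fun p _ => Psi p.1 p.2) ?_ ?_ ?_ ?_ ?_
        · intro g hg
          rw [Finset.mem_filter, Fintype.mem_piFinset] at hg
          rw [Finset.mem_product, Fintype.mem_piFinset]
          refine ⟨?_, Finset.mem_univ _⟩
          intro k
          have h1 := hg.1 k
          rw [Finset.mem_Icc] at h1
          have h2 : (g k).natAbs ≠ 0 := Int.natAbs_ne_zero.mpr (hg.2 k)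
          rw [Finset.mem_range]
          have hMpos : 1 ≤ M := by omega
          show (g k).natAbs - 1 < M
          omega
        · intro p hp
          rw [Finset.mem_product, Fintype.mem_piFinset] at hp
          rw [Finset.mem_filter, Fintype.mem_piFinset]
          refine ⟨?_, fun k => psi_ne_zero _ _⟩
          intro k
          have h1 := hp.1 k
          rw [Finset.mem_range] at h1
          rw [Finset.mem_Icc]
          unfold Psi psi
          cases hb : p.2 k <;> simp <;> omega
        · intro g hg
          rw [Finset.mem_filter] at hg
          exact hPsiInv g hg.2
        · rintro ⟨p1, p2⟩ hp
          rw [Prod.mk.injEq]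
          constructor
          · funext k
            simp only [Psi, natAbs_psi]
            omega
          · funext k
            simp only [Psi]
            show decide (psi (p2 k) (p1 k) < 0) = p2 k
            by_cases hb : psi (p2 k) (p1 k) < 0
            · rw [decide_eq_true hb, ((psi_neg_iff _ _).mp hb)]
            · rw [decide_eq_false hb]
              rcases Bool.eq_false_or_eq_true (p2 k) with hc | hc
              · exact absurd ((psi_neg_iff _ _).mpr hc) hb
              · rw [hc]
        · intro g hg
          rw [Finset.mem_filter] at hg
          rw [hPsiInv g hg.2]
    _ = ∑ s ∈ Fintype.piFinset (fun _ : Fin n => Finset.range M),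
          ∑ ε : Fin n → Bool,
          (if AdjOK π (Psi s ε) ∧ monomOf (Psi s ε) = d then q ^ negCount (Psi s ε) else 0) :=
        Finset.sum_product _ _ _
    _ = ∑ s ∈ Fintype.piFinset (fun _ : Fin n => Finset.range M),
          (if (Monotone s ∧ (∀ j ∈ PeakPerm π, ∀ (h0 : j - 2 < n) (h2 : j < n),
              s ⟨j - 2, h0⟩ < s ⟨j, h2⟩) ∧ (∑ j, Finsupp.single (s j) 1) = d)
            then q ^ ((Finset.range n).filter (fun j => j ∈ DesPerm π ∧
                  ∀ (h1 : j - 1 < n) (h2 : j < n), s ⟨j - 1, h1⟩ = s ⟨j, h2⟩)).card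
              * (q + 1) ^ (Finset.univ.image s).card
            else 0) :=
        Finset.sum_congr rfl (fun s _ => inner_eq q d π s)
    _ = ∑' s : Fin n → ℕ,
          (if (Monotone s ∧ (∀ j ∈ PeakPerm π, ∀ (h0 : j - 2 < n) (h2 : j < n),
              s ⟨j - 2, h0⟩ < s ⟨j, h2⟩) ∧ (∑ j, Finsupp.single (s j) 1) = d)
            then q ^ ((Finset.range n).filter (fun j => j ∈ DesPerm π ∧
                  ∀ (h1 : j - 1 < n) (h2 : j < n), s ⟨j - 1, h1⟩ = s ⟨j, h2⟩)).card
              * (q + 1) ^ (Finset.univ.image s).card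
            else 0) := by
        refine (tsum_eq_sum ?_).symm
        intro s hs
        rw [if_neg]
        rintro ⟨-, -, hmm⟩
        exact hs (Fintype.mem_piFinset.mpr (fun j => Finset.mem_range.mpr (keyN s hmm j)))
    _ = ∑' s : Fin n → ℕ, Set.indicator {s : Fin n → ℕ | Monotone s ∧
          ∀ j ∈ PeakPerm π, ∀ (h0 : j - 2 < n) (h2 : j < n), s ⟨j - 2, h0⟩ < s ⟨j, h2⟩}
          (fun s => if (∑ j, Finsupp.single (s j) 1) = d then
            q ^ ((Finset.range n).filter (fun j => j ∈ DesPerm π ∧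
                  ∀ (h1 : j - 1 < n) (h2 : j < n), s ⟨j - 1, h1⟩ = s ⟨j, h2⟩)).card
              * (q + 1) ^ (Finset.univ.image s).card
            else 0) s := by
        apply tsum_congr
        intro s
        rw [Set.indicator_apply]
        by_cases h : Monotone s ∧ (∀ j ∈ PeakPerm π, ∀ (h0 : j - 2 < n) (h2 : j < n),
            s ⟨j - 2, h0⟩ < s ⟨j, h2⟩)
        · have hmem : s ∈ {s : Fin n → ℕ | Monotone s ∧
              ∀ j ∈ PeakPerm π, ∀ (h0 : j - 2 < n) (h2 : j < n), s ⟨j - 2, h0⟩ < s ⟨j, h2⟩} := h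
          rw [if_pos hmem]
          by_cases h2 : (∑ j, Finsupp.single (s j) 1) = d
          · rw [if_pos ⟨h.1, h.2, h2⟩, if_pos h2]
          · rw [if_neg (by tauto), if_neg h2]
        · have hmem : s ∉ {s : Fin n → ℕ | Monotone s ∧
              ∀ j ∈ PeakPerm π, ∀ (h0 : j - 2 < n) (h2 : j < n), s ⟨j - 2, h0⟩ < s ⟨j, h2⟩} := h
          rw [if_neg hmem, if_neg (by tauto)]
    _ = (∑' s : {s : Fin n → ℕ // Monotone s ∧
          ∀ j ∈ PeakPerm π, ∀ (h0 : j - 2 < n) (h2 : j < n), s ⟨j - 2, h0⟩ < s ⟨j, h2⟩},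
        if (∑ j, Finsupp.single (s.1 j) 1) = d then
          q ^ ((Finset.range n).filter (fun j => j ∈ DesPerm π ∧
                ∀ (h1 : j - 1 < n) (h2 : j < n), s.1 ⟨j - 1, h1⟩ = s.1 ⟨j, h2⟩)).card
          * (q + 1) ^ (Finset.univ.image s.1).card
        else 0) :=
        (tsum_subtype {s : Fin n → ℕ | Monotone s ∧
            ∀ j ∈ PeakPerm π, ∀ (h0 : j - 2 < n) (h2 : j < n), s ⟨j - 2, h0⟩ < s ⟨j, h2⟩}
          (fun s => if (∑ j, Finsupp.single (s j) 1) = d then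
            q ^ ((Finset.range n).filter (fun j => j ∈ DesPerm π ∧
                  ∀ (h1 : j - 1 < n) (h2 : j < n), s ⟨j - 1, h1⟩ = s ⟨j, h2⟩)).card
              * (q + 1) ^ (Finset.univ.image s).card
            else 0)).symm
end
end

section
/- Let ≺ be any total order on ℙ^± and define the binary relation R on ℙ^± by i R j iff (i ≼ j and not i = j ∈ −ℙ). Then for every integer n, H_n = ∑_{k=0}^{n} ∑_{U} ∑_{V} (∏_{u ∈ U} x_u)(∏_{v ∈ V} x_v), where U ranges over the size-k subsets of −ℙ and V over the size-(n−k) multisubsets of ℙ (the product over v ∈ V taking each element with its multiplicity). In particular, H_n does not depend on the choice of the total order ≺. -/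
open Classical
noncomputable section

/-- The relation `R` built from a (strict) total order `slt` on `ℙ^±`:
`i R j` iff `i ≼ j` but not `i = j ∈ -ℙ`. -/
def Rof (slt : ℤ → ℤ → Prop) (a b : ℤ) : Prop :=
  (slt a b ∨ a = b) ∧ ¬(a = b ∧ a < 0)

/-- `w` is a tuple `(i_1, …, i_{nt}) ∈ (ℙ^±)^{nt}` with `i_1 R i_2 R ⋯ R i_{nt}`. -/
def IsRWord (R : ℤ → ℤ → Prop) (nt : ℕ) (w : Fin nt → ℤ) : Prop :=
  (∀ i, w i ≠ 0) ∧ ∀ i j : Fin nt, (i : ℕ) + 1 = (j : ℕ) → R (w i) (w j)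

/-- The exponent vector of the monomial `x_{f 1} ⋯ x_{f n}` in the alphabet
`X^± = {x_i : i ∈ ℤ, i ≠ 0}`. -/
def monomPM {n : ℕ} (f : Fin n → ℤ) : ℤ →₀ ℕ :=
  ∑ i, Finsupp.single (f i) 1

/-- `H_n = ∑ x_{i_1} x_{i_2} ⋯ x_{i_n}`, summed over all `R`-chains
`i_1 R i_2 R ⋯ R i_n` in `ℙ^±`; `H_n = 0` for `n < 0`. -/
def Hser (R : ℤ → ℤ → Prop) (n : ℤ) : MvPowerSeries ℤ ℂ :=
  if n < 0 then 0 else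
    fun d => ∑' w : {w : Fin n.toNat → ℤ // IsRWord R n.toNat w},
      if monomPM w.1 = d then 1 else 0

/-- `∑_U ∏_{u ∈ U} x_u`, `U` ranging over the size-`k` subsets of `-ℙ`
(the elementary symmetric function in the negatively-indexed variables). -/
def eNeg (k : ℕ) : MvPowerSeries ℤ ℂ :=
  fun d => if ((∀ i, d i ≠ 0 → i < 0) ∧ (∀ i, d i ≤ 1) ∧ d.sum (fun _ v => v) = k)
    then 1 else 0

/-- `∑_V ∏_{v ∈ V} x_v`, `V` ranging over the size-`m` multisubsets of `ℙ`
(the complete homogeneous symmetric function in the positively-indexed variables). -/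
def hPos (m : ℕ) : MvPowerSeries ℤ ℂ :=
  fun d => if ((∀ i, d i ≠ 0 → 0 < i) ∧ d.sum (fun _ v => v) = m) then 1 else 0

section Aux
variable (slt : ℤ → ℤ → Prop)

/-- Extension of `slt`'s reflexive closure to a total preorder on all of `ℤ`. -/
def rel : ℤ → ℤ → Prop := fun a b => a = 0 ∨ (b ≠ 0 ∧ (slt a b ∨ a = b))

variable (htrans : ∀ a b c : ℤ, a ≠ 0 → b ≠ 0 → c ≠ 0 → slt a b → slt b c → slt a c)
    (hirr : ∀ a : ℤ, a ≠ 0 → ¬ slt a a)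
    (htot : ∀ a b : ℤ, a ≠ 0 → b ≠ 0 → a ≠ b → slt a b ∨ slt b a)

include htrans hirr in
theorem rel_antisymm : ∀ a b, rel slt a b → rel slt b a → a = b := by
  intro a b hab hba
  rcases hba with rfl | ⟨ha, hba⟩
  · rcases hab with rfl | ⟨hb, _⟩
    · rfl
    · exact absurd rfl hb
  · rcases hab with rfl | ⟨hb, hab⟩
    · exact absurd rfl ha
    · rcases hab with hab | rfl
      · rcases hba with hba | rfl
        · exact absurd (htrans a b a ha hb ha hab hba) (hirr a ha)
        · rfl
      · rfl

include htrans in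
theorem rel_trans' : ∀ a b c, rel slt a b → rel slt b c → rel slt a c := by
  intro a b c hab hbc
  by_cases ha : a = 0
  · exact Or.inl ha
  rcases hab with rfl | ⟨hb, hab⟩
  · exact absurd rfl ha
  rcases hbc with rfl | ⟨hc, hbc⟩
  · exact absurd rfl hb
  refine Or.inr ⟨hc, ?_⟩
  rcases hab with hab | rfl
  · rcases hbc with hbc | rfl
    · exact Or.inl (htrans a b c ha hb hc hab hbc)
    · exact Or.inl hab
  · exact hbc

include htot in
theorem rel_total' : ∀ a b, rel slt a b ∨ rel slt b a := by
  intro a b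
  by_cases ha : a = 0
  · exact Or.inl (Or.inl ha)
  by_cases hb : b = 0
  · exact Or.inr (Or.inl hb)
  by_cases hab : a = b
  · exact Or.inl (Or.inr ⟨hb, Or.inr hab⟩)
  rcases htot a b ha hb hab with h | h
  · exact Or.inl (Or.inr ⟨hb, Or.inl h⟩)
  · exact Or.inr (Or.inr ⟨ha, Or.inl h⟩)

end Aux

theorem listAux : ∀ L : List ℤ, (L.map (fun a => Finsupp.single a (1:ℕ))).sum
    = Multiset.toFinsupp (↑L : Multiset ℤ) := by
  intro L
  induction L with
  | nil => ext a; simp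
  | cons a L ih =>
    ext b
    simp only [List.map_cons, List.sum_cons, ih, Finsupp.add_apply,
      Multiset.toFinsupp_apply, Multiset.coe_count] at *
    simp [List.count_cons, Finsupp.single_apply]
    omega

theorem monomPM_eq_toFinsupp {nt : ℕ} (w : Fin nt → ℤ) :
    monomPM w = Multiset.toFinsupp (↑(List.ofFn w) : Multiset ℤ) := by
  rw [← listAux, List.map_ofFn, monomPM, ← List.sum_ofFn]
  rfl

theorem monomPM_apply {nt : ℕ} (w : Fin nt → ℤ) (a : ℤ) :
    monomPM w a = (Finset.univ.filter (fun i => w i = a)).card := by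
  rw [Finset.card_filter, monomPM]
  rw [Finsupp.finset_sum_apply]
  refine Finset.sum_congr rfl fun i _ => ?_
  simp [Finsupp.single_apply]

theorem monomPM_sum {nt : ℕ} (w : Fin nt → ℤ) :
    (monomPM w).sum (fun _ v => v) = nt := by
  have h1 : ((monomPM w).sum fun _ v => v) = Multiset.card (Finsupp.toMultiset (monomPM w)) := by
    rw [Finsupp.card_toMultiset]; rfl
  rw [h1, monomPM_eq_toFinsupp, Multiset.toFinsupp_toMultiset]
  simp

section Words
variable (slt : ℤ → ℤ → Prop)
    (htrans : ∀ a b c : ℤ, a ≠ 0 → b ≠ 0 → c ≠ 0 → slt a b → slt b c → slt a c)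
    (hirr : ∀ a : ℤ, a ≠ 0 → ¬ slt a a)
    (htot : ∀ a b : ℤ, a ≠ 0 → b ≠ 0 → a ≠ b → slt a b ∨ slt b a)

include htrans in
theorem sorted_ofFn_of_RWord {nt : ℕ} {w : Fin nt → ℤ} (hw : IsRWord (Rof slt) nt w) :
    List.Pairwise (rel slt) (List.ofFn w) := by
  haveI : IsTrans ℤ (rel slt) := ⟨fun a b c => rel_trans' slt htrans a b c⟩
  rw [← List.isChain_iff_pairwise, List.isChain_iff_getElem]
  intro i hi
  simp only [List.length_ofFn] at hi
  rw [List.getElem_ofFn, List.getElem_ofFn]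
  have hlen : (List.ofFn w).length = nt := List.length_ofFn
  have hij : ((Fin.cast hlen ⟨i, by omega⟩ : Fin nt) : ℕ) + 1
      = ((Fin.cast hlen ⟨i + 1, by omega⟩ : Fin nt) : ℕ) := rfl
  have := hw.2 _ _ hij
  exact Or.inr ⟨hw.1 _, this.1⟩

include htrans hirr in
theorem word_unique {nt : ℕ} {w w' : Fin nt → ℤ} (hw : IsRWord (Rof slt) nt w)
    (hw' : IsRWord (Rof slt) nt w') (h : monomPM w = monomPM w') : w = w' := by
  haveI : IsAntisymm ℤ (rel slt) := ⟨fun a b => rel_antisymm slt htrans hirr a b⟩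
  have hperm : (List.ofFn w).Perm (List.ofFn w') := by
    rw [← Multiset.coe_eq_coe]
    have := congrArg Finsupp.toMultiset
      ((monomPM_eq_toFinsupp w).symm.trans (h.trans (monomPM_eq_toFinsupp w')))
    simpa [Multiset.toFinsupp_toMultiset] using this
  have heq := List.Perm.eq_of_pairwise' (r := rel slt) (sorted_ofFn_of_RWord slt htrans hw)
    (sorted_ofFn_of_RWord slt htrans hw') hperm
  exact List.ofFn_injective heq

include htrans hirr in
theorem two_neg_aux {nt : ℕ} {w : Fin nt → ℤ} (hw : IsRWord (Rof slt) nt w)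
    {a : ℤ} {i j : Fin nt} (hi : w i = a) (hj : w j = a) (hlt : i < j) (ha : a < 0) :
    False := by
  have hjn : (j : ℕ) < nt := j.isLt
  have hltn : (i : ℕ) < (j : ℕ) := hlt
  have hin : (i : ℕ) + 1 < nt := by omega
  set i' : Fin nt := ⟨(i : ℕ) + 1, hin⟩ with hi'def
  have hR : Rof slt (w i) (w i') := hw.2 i i' rfl
  by_cases hij : (i : ℕ) + 1 = (j : ℕ)
  · have : i' = j := Fin.ext hij
    rw [this, hi, hj] at hR
    exact hR.2 ⟨rfl, ha⟩
  · -- i' < j, use pairwise sortedness to sandwich w i'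
    have hsorted := sorted_ofFn_of_RWord slt htrans hw
    rw [List.pairwise_iff_get] at hsorted
    have hlen : (List.ofFn w).length = nt := List.length_ofFn
    have hrel2 : rel slt (w i') (w j) := by
      have := hsorted (Fin.cast hlen.symm i') (Fin.cast hlen.symm j)
        (Fin.lt_def.mpr (by simp only [Fin.coe_cast, hi'def, Fin.val_mk]; omega))
      simpa [List.get_ofFn] using this
    have hrel1 : rel slt (w i) (w i') := Or.inr ⟨hw.1 _, hR.1⟩
    have : w i' = a := by
      apply rel_antisymm slt htrans hirr
      · exact hj ▸ hrel2
      · exact hi ▸ hrel1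
    rw [hi, this] at hR
    exact hR.2 ⟨rfl, ha⟩

include htrans hirr in
theorem RWord_props {nt : ℕ} {w : Fin nt → ℤ} (hw : IsRWord (Rof slt) nt w) :
    (∀ i, monomPM w i ≠ 0 → i ≠ 0) ∧ (∀ i < 0, monomPM w i ≤ 1) ∧
      (monomPM w).sum (fun _ v => v) = nt := by
  refine ⟨?_, ?_, monomPM_sum w⟩
  · intro i hi
    rw [monomPM_apply] at hi
    have : (Finset.univ.filter (fun j => w j = i)).Nonempty := by
      rw [Finset.nonempty_iff_ne_empty]
      intro hc; rw [hc] at hi; simp at hi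
    obtain ⟨j, hj⟩ := this
    simp only [Finset.mem_filter] at hj
    rw [← hj.2]; exact hw.1 j
  · intro a ha
    by_contra hc
    push_neg at hc
    rw [monomPM_apply] at hc
    obtain ⟨i, hi, j, hj, hij⟩ := Finset.one_lt_card.mp hc
    simp only [Finset.mem_filter, Finset.mem_univ, true_and] at hi hj
    -- wlog i < j
    rcases lt_or_gt_of_ne hij with hlt | hlt
    · exact two_neg_aux slt htrans hirr hw hi hj hlt ha
    · exact two_neg_aux slt htrans hirr hw hj hi hlt ha

include htrans hirr htot in
theorem word_exists {nt : ℕ} {d : ℤ →₀ ℕ} (h1 : ∀ i, d i ≠ 0 → i ≠ 0)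
    (h2 : ∀ i < 0, d i ≤ 1) (h3 : d.sum (fun _ v => v) = nt) :
    ∃ w : Fin nt → ℤ, IsRWord (Rof slt) nt w ∧ monomPM w = d := by
  haveI : IsTrans ℤ (rel slt) := ⟨fun a b c => rel_trans' slt htrans a b c⟩
  haveI : IsAntisymm ℤ (rel slt) := ⟨fun a b => rel_antisymm slt htrans hirr a b⟩
  haveI : IsTotal ℤ (rel slt) := ⟨fun a b => rel_total' slt htot a b⟩
  set L : List ℤ := Multiset.sort (Finsupp.toMultiset d) (rel slt) with hL
  have hlen : L.length = nt := by
    rw [hL, Multiset.length_sort, Finsupp.card_toMultiset, ← h3]; rfl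
  set w : Fin nt → ℤ := fun i => L.get (Fin.cast hlen.symm i) with hw
  have hofn : List.ofFn w = L := by
    apply List.ext_get
    · simp [hlen]
    · intro i hi1 hi2
      simp [hw, List.get_ofFn]
  have hmono : monomPM w = d := by
    rw [monomPM_eq_toFinsupp, hofn, hL, Multiset.sort_eq, Finsupp.toMultiset_toFinsupp]
  have hnz : ∀ i, w i ≠ 0 := by
    intro i
    have hmem : w i ∈ L := L.get_mem _
    have : w i ∈ Finsupp.toMultiset d := by
      rw [hL] at hmem
      rwa [← Multiset.mem_sort (rel slt)]
    rw [Finsupp.mem_toMultiset] at this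
    exact h1 _ (Finsupp.mem_support_iff.mp this)
  refine ⟨w, ⟨hnz, ?_⟩, hmono⟩
  intro i j hij
  have hsorted : List.Pairwise (rel slt) L := Multiset.pairwise_sort _ (rel slt)
  rw [List.pairwise_iff_get] at hsorted
  have hrel : rel slt (w i) (w j) := by
    apply hsorted (Fin.cast hlen.symm i) (Fin.cast hlen.symm j)
    simp only [Fin.lt_def, Fin.coe_cast]; omega
  have hrel' : (w j ≠ 0 ∧ (slt (w i) (w j) ∨ w i = w j)) :=
    hrel.resolve_left (hnz i)
  refine ⟨hrel'.2, ?_⟩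
  rintro ⟨heq, hneg⟩
  -- two equal negative letters at positions i ≠ j : contradicts d (w i) ≤ 1
  have hij' : i ≠ j := by intro hc; rw [hc] at hij; omega
  have hcard : 2 ≤ monomPM w (w i) := by
    rw [monomPM_apply]
    have hsub : ({i, j} : Finset (Fin nt)) ⊆ Finset.univ.filter (fun k => w k = w i) := by
      intro k hk
      simp only [Finset.mem_insert, Finset.mem_singleton] at hk
      rcases hk with rfl | rfl <;> simp [heq]
    have := Finset.card_le_card hsub
    rwa [Finset.card_pair hij'] at this
  rw [hmono] at hcard
  have := h2 (w i) hneg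
  omega

include htrans hirr htot in
theorem coeff_H (nt : ℕ) (d : ℤ →₀ ℕ) :
    (∑' w : {w : Fin nt → ℤ // IsRWord (Rof slt) nt w}, if monomPM w.1 = d then (1:ℂ) else 0)
    = if ((∀ i, d i ≠ 0 → i ≠ 0) ∧ (∀ i < 0, d i ≤ 1) ∧ d.sum (fun _ v => v) = nt)
      then 1 else 0 := by
  by_cases hd : (∀ i, d i ≠ 0 → i ≠ 0) ∧ (∀ i < 0, d i ≤ 1) ∧ d.sum (fun _ v => v) = nt
  · rw [if_pos hd]
    obtain ⟨w, hwR, hwm⟩ := word_exists slt htrans hirr htot hd.1 hd.2.1 hd.2.2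
    rw [tsum_eq_single (⟨w, hwR⟩ : {w : Fin nt → ℤ // IsRWord (Rof slt) nt w})]
    · rw [if_pos hwm]
    · intro w' hw'
      rw [if_neg]
      intro hc
      exact hw' (Subtype.ext (word_unique slt htrans hirr w'.2 hwR (hc.trans hwm.symm)))
  · rw [if_neg hd]
    have hz : ∀ w : {w : Fin nt → ℤ // IsRWord (Rof slt) nt w},
        (if monomPM w.1 = d then (1:ℂ) else 0) = 0 := by
      intro w
      rw [if_neg]
      intro hc
      exact hd (hc ▸ RWord_props slt htrans hirr w.2)
    calc ∑' w : {w : Fin nt → ℤ // IsRWord (Rof slt) nt w},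
          (if monomPM w.1 = d then (1:ℂ) else 0)
        = ∑' _ : {w : Fin nt → ℤ // IsRWord (Rof slt) nt w}, (0:ℂ) := tsum_congr hz
      _ = 0 := tsum_zero

end Words

theorem finsupp_sum_add_s10 (a b : ℤ →₀ ℕ) :
    (a + b).sum (fun _ v => v) = a.sum (fun _ v => v) + b.sum (fun _ v => v) :=
  Finsupp.sum_add_index' (fun _ => rfl) (fun _ _ _ => rfl)

theorem decomp_eq {d : ℤ →₀ ℕ} (p : (ℤ →₀ ℕ) × (ℤ →₀ ℕ)) (hp : p.1 + p.2 = d)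
    (hA : ∀ i, p.1 i ≠ 0 → i < 0) (hB : ∀ i, p.2 i ≠ 0 → 0 < i) :
    p.1 = Finsupp.filter (fun i => i < 0) d ∧ p.2 = Finsupp.filter (fun i => 0 < i) d := by
  constructor
  · ext i
    rw [Finsupp.filter_apply]
    by_cases hi : i < 0
    · rw [if_pos hi, ← hp]
      have : p.2 i = 0 := by by_contra hc; have := hB i hc; omega
      simp [this]
    · rw [if_neg hi]
      by_contra hc
      exact hi (hA i hc)
  · ext i
    rw [Finsupp.filter_apply]
    by_cases hi : 0 < i
    · rw [if_pos hi, ← hp]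
      have : p.1 i = 0 := by by_contra hc; have := hA i hc; omega
      simp [this]
    · rw [if_neg hi]
      by_contra hc
      exact hi (hB i hc)

theorem coeff_RHS (nt : ℕ) (d : ℤ →₀ ℕ) :
    MvPowerSeries.coeff d (∑ k ∈ Finset.range (nt + 1), eNeg k * hPos (nt - k))
    = if ((∀ i, d i ≠ 0 → i ≠ 0) ∧ (∀ i < 0, d i ≤ 1) ∧ d.sum (fun _ v => v) = nt)
      then 1 else 0 := by
  rw [map_sum]
  have hterm : ∀ k, MvPowerSeries.coeff d (eNeg k * hPos (nt - k))
      = ∑ p ∈ Finset.HasAntidiagonal.antidiagonal d,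
        (if ((∀ i, p.1 i ≠ 0 → i < 0) ∧ (∀ i, p.1 i ≤ 1) ∧ p.1.sum (fun _ v => v) = k)
          then (1:ℂ) else 0) *
        (if ((∀ i, p.2 i ≠ 0 → 0 < i) ∧ p.2.sum (fun _ v => v) = nt - k) then (1:ℂ) else 0) := by
    intro k
    rw [MvPowerSeries.coeff_mul]
    rfl
  simp only [hterm]
  by_cases hd : (∀ i, d i ≠ 0 → i ≠ 0) ∧ (∀ i < 0, d i ≤ 1) ∧ d.sum (fun _ v => v) = nt
  · rw [if_pos hd]
    set a : ℤ →₀ ℕ := Finsupp.filter (fun i => i < 0) d with ha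
    set b : ℤ →₀ ℕ := Finsupp.filter (fun i => 0 < i) d with hb
    have hab : a + b = d := by
      ext i
      rw [Finsupp.add_apply, ha, hb, Finsupp.filter_apply, Finsupp.filter_apply]
      rcases lt_trichotomy i 0 with h | h | h
      · simp [h, not_lt.mpr (le_of_lt h)]
      · subst h
        have : d 0 = 0 := by by_contra hc; exact (hd.1 0 hc) rfl
        simp [this]
      · simp [h, not_lt.mpr (le_of_lt h)]
    set k0 : ℕ := a.sum (fun _ v => v) with hk0
    have hsum : k0 + b.sum (fun _ v => v) = nt := by
      rw [hk0, ← finsupp_sum_add_s10, hab, hd.2.2]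
    have hk0le : k0 ≤ nt := by omega
    have hAa : (∀ i, a i ≠ 0 → i < 0) ∧ (∀ i, a i ≤ 1) ∧ a.sum (fun _ v => v) = k0 := by
      refine ⟨?_, ?_, rfl⟩
      · intro i hi
        rw [ha, Finsupp.filter_apply] at hi
        by_contra hc; rw [if_neg hc] at hi; exact hi rfl
      · intro i
        rw [ha, Finsupp.filter_apply]
        split
        · exact hd.2.1 i (by assumption)
        · exact Nat.zero_le 1
    have hBb : (∀ i, b i ≠ 0 → 0 < i) ∧ b.sum (fun _ v => v) = nt - k0 := by
      refine ⟨?_, by omega⟩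
      intro i hi
      rw [hb, Finsupp.filter_apply] at hi
      by_contra hc; rw [if_neg hc] at hi; exact hi rfl
    rw [Finset.sum_eq_single_of_mem k0 (Finset.mem_range.mpr (by omega))]
    · rw [Finset.sum_eq_single_of_mem (a, b) (Finset.HasAntidiagonal.mem_antidiagonal.mpr hab)]
      · rw [if_pos hAa, if_pos hBb, one_mul]
      · rintro p hp hpne
        by_cases hA : (∀ i, p.1 i ≠ 0 → i < 0) ∧ (∀ i, p.1 i ≤ 1) ∧ p.1.sum (fun _ v => v) = k0
        · by_cases hB : (∀ i, p.2 i ≠ 0 → 0 < i) ∧ p.2.sum (fun _ v => v) = nt - k0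
          · exfalso
            obtain ⟨h1, h2⟩ := decomp_eq p (Finset.HasAntidiagonal.mem_antidiagonal.mp hp) hA.1 hB.1
            exact hpne (Prod.ext h1 h2)
          · rw [if_neg hB, mul_zero]
        · rw [if_neg hA, zero_mul]
    · intro k hk hkne
      apply Finset.sum_eq_zero
      intro p hp
      by_cases hA : (∀ i, p.1 i ≠ 0 → i < 0) ∧ (∀ i, p.1 i ≤ 1) ∧ p.1.sum (fun _ v => v) = k
      · by_cases hB : (∀ i, p.2 i ≠ 0 → 0 < i) ∧ p.2.sum (fun _ v => v) = nt - k
        · exfalso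
          obtain ⟨h1, h2⟩ := decomp_eq p (Finset.HasAntidiagonal.mem_antidiagonal.mp hp) hA.1 hB.1
          apply hkne
          rw [← hA.2.2, h1]
        · rw [if_neg hB, mul_zero]
      · rw [if_neg hA, zero_mul]
  · rw [if_neg hd]
    apply Finset.sum_eq_zero
    intro k hk
    apply Finset.sum_eq_zero
    intro p hp
    by_cases hA : (∀ i, p.1 i ≠ 0 → i < 0) ∧ (∀ i, p.1 i ≤ 1) ∧ p.1.sum (fun _ v => v) = k
    · by_cases hB : (∀ i, p.2 i ≠ 0 → 0 < i) ∧ p.2.sum (fun _ v => v) = nt - k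
      · exfalso
        apply hd
        have hpd := Finset.HasAntidiagonal.mem_antidiagonal.mp hp
        have hkle : k ≤ nt := by
          have := Finset.mem_range.mp hk; omega
        refine ⟨?_, ?_, ?_⟩
        · intro i hi
          rw [← hpd, Finsupp.add_apply] at hi
          rcases Nat.eq_zero_or_pos (p.1 i) with h1 | h1
          · have : p.2 i ≠ 0 := by omega
            have := hB.1 i this; omega
          · have := hA.1 i (by omega); omega
        · intro i hi
          rw [← hpd, Finsupp.add_apply]
          have h2 : p.2 i = 0 := by
            by_contra hc; have := hB.1 i hc; omega
          have := hA.2.1 i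
          omega
        · rw [← hpd, finsupp_sum_add_s10, hA.2.2, hB.2]
          omega
      · rw [if_neg hB, mul_zero]
    · rw [if_neg hA, zero_mul]

theorem main_aux (slt : ℤ → ℤ → Prop)
    (htrans : ∀ a b c : ℤ, a ≠ 0 → b ≠ 0 → c ≠ 0 → slt a b → slt b c → slt a c)
    (hirr : ∀ a : ℤ, a ≠ 0 → ¬ slt a a)
    (htot : ∀ a b : ℤ, a ≠ 0 → b ≠ 0 → a ≠ b → slt a b ∨ slt b a)
    (n : ℤ) :
    Hser (Rof slt) n =
      (if n < 0 then 0 else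
        ∑ k ∈ Finset.range (n.toNat + 1), eNeg k * hPos (n.toNat - k)) := by
  by_cases hn : n < 0
  · rw [if_pos hn]; exact if_pos hn
  · rw [if_neg hn]; refine (if_neg hn).trans ?_
    funext d
    have hL := coeff_H slt htrans hirr htot n.toNat d
    have hR := coeff_RHS n.toNat d
    rw [MvPowerSeries.coeff_apply] at hR
    exact hL.trans hR.symm


/-- for any total order `≺` on `ℙ^±` (given by its strict part `slt`)
and every integer `n`, `H_n = ∑_{k=0}^{n} (∑_U ∏_{u ∈ U} x_u)(∑_V ∏_{v ∈ V} x_v)`,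
`U` over size-`k` subsets of `-ℙ` and `V` over size-`(n-k)` multisubsets of `ℙ`;
in particular `H_n` does not depend on the choice of `≺`. -/
theorem Hser_eq_sum_eNeg_hPos (slt : ℤ → ℤ → Prop)
    (htrans : ∀ a b c : ℤ, a ≠ 0 → b ≠ 0 → c ≠ 0 → slt a b → slt b c → slt a c)
    (hirr : ∀ a : ℤ, a ≠ 0 → ¬ slt a a)
    (htot : ∀ a b : ℤ, a ≠ 0 → b ≠ 0 → a ≠ b → slt a b ∨ slt b a)
    (n : ℤ) :
    Hser (Rof slt) n =
      (if n < 0 then 0 else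
        ∑ k ∈ Finset.range (n.toNat + 1), eNeg k * hPos (n.toNat - k)) ∧
    (∀ slt₂ : ℤ → ℤ → Prop,
      (∀ a b c : ℤ, a ≠ 0 → b ≠ 0 → c ≠ 0 → slt₂ a b → slt₂ b c → slt₂ a c) →
      (∀ a : ℤ, a ≠ 0 → ¬ slt₂ a a) →
      (∀ a b : ℤ, a ≠ 0 → b ≠ 0 → a ≠ b → slt₂ a b ∨ slt₂ b a) →
      Hser (Rof slt) n = Hser (Rof slt₂) n) :=
  ⟨main_aux slt htrans hirr htot n, fun slt₂ h1 h2 h3 =>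
    (main_aux slt htrans hirr htot n).trans (main_aux slt₂ h1 h2 h3 n).symm⟩
end
end
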